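/- arXiv:2210.01121 — 2 statements merged into one kernel-verified Lean document; each statement's English description precedes it below -/
import Mathlib

section
/- The linear forms K₁ = X̃_{1-p} + Ỹ_{1-q} and K₂ = X̃_p + Ỹ_q are stochastically independent if and only if X is Poisson distributed, i.e. there exists λ ≥ 0 with P(X = k) = e^{-λ} λ^k / k! for all k ∈ ℕ. -/
open MeasureTheory ProbabilityTheory



namespace PoiChar

open Finset MeasureTheory ProbabilityTheory Set
set_option linter.unusedSectionVars false
set_option linter.unusedVariables false


/-- pmf of the pair (thinned-kept, thinned-removed) built from pmf `b`. -/
noncomputable def ru (c : ℝ) (b : ℕ → ℝ) (i j : ℕ) : ℝ :=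
  b (i + j) * ((i + j).choose i) * (1 - c) ^ i * c ^ j

/-- joint pmf of (K₁, K₂). -/
noncomputable def Jr (p q : ℝ) (b : ℕ → ℝ) (m n : ℕ) : ℝ :=
  ∑ i ∈ range (m + 1), ∑ j ∈ range (n + 1), ru p b i j * ru q b (m - i) (n - j)

lemma ru_i0 (c : ℝ) (b : ℕ → ℝ) (i : ℕ) : ru c b i 0 = b i * (1 - c) ^ i := by
  simp [ru]

lemma ru_i1 (c : ℝ) (b : ℕ → ℝ) (i : ℕ) :
    ru c b i 1 = ((i : ℝ) + 1) * b (i + 1) * (1 - c) ^ i * c := by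
  rw [ru, Nat.choose_succ_self_right]
  push_cast
  ring

lemma Jr00 (p q : ℝ) (b : ℕ → ℝ) : Jr p q b 0 0 = b 0 * b 0 := by
  simp [Jr, ru]

lemma Jr01 (p q : ℝ) (b : ℕ → ℝ) : Jr p q b 0 1 = b 0 * b 1 * (p + q) := by
  simp [Jr, Finset.sum_range_succ, ru_i0, ru_i1, ru]
  ring

lemma Jrk0 (p q : ℝ) (b : ℕ → ℝ) (k : ℕ) :
    Jr p q b k 0 = ∑ i ∈ range (k + 1), b i * (1-p) ^ i * b (k - i) * (1-q) ^ (k - i) := by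
  rw [Jr]
  refine Finset.sum_congr rfl fun i _ => ?_
  rw [Finset.sum_range_one, ru_i0, ru_i0]
  ring

lemma Jrk1 (p q : ℝ) (b : ℕ → ℝ) (k : ℕ) :
    Jr p q b k 1 = ∑ i ∈ range (k + 1),
      (b i * (1-p) ^ i * (((k - i : ℕ) : ℝ) + 1) * b (k - i + 1) * (1-q) ^ (k - i) * q
       + ((i : ℝ) + 1) * b (i + 1) * (1-p) ^ i * p * b (k - i) * (1-q) ^ (k - i)) := by
  rw [Jr]
  refine Finset.sum_congr rfl fun i hi => ?_
  rw [show (1:ℕ)+1 = 2 from rfl, Finset.sum_range_succ, Finset.sum_range_one]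
  rw [ru_i0, ru_i0, ru_i1, ru_i1]
  ring


lemma rec_of_rank (p q : ℝ) (hp0 : 0 < p) (hp1 : p < 1) (hq0 : 0 < q) (hq1 : q < 1)
    (b : ℕ → ℝ) (hb0 : 0 < b 0)
    (hrank : ∀ k, Jr p q b k 1 * Jr p q b 0 0 = Jr p q b k 0 * Jr p q b 0 1) :
    ∀ k : ℕ, ((k : ℝ) + 1) * b (k + 1) * b 0 = b 1 * b k := by
  intro k
  induction k using Nat.strong_induction_on with
  | _ k IH =>
    match k with
    | 0 => norm_num
    | Nat.succ k =>
      have H := hrank (k + 1)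
      rw [Jrk1, Jr00, Jr01, Jrk0, Finset.sum_mul, Finset.sum_mul] at H
      have E : ∑ i ∈ range (k + 1 + 1),
          ((b i * (1-p) ^ i * (((k + 1 - i : ℕ) : ℝ) + 1) * b (k + 1 - i + 1) * (1-q) ^ (k + 1 - i) * q
             + ((i : ℝ) + 1) * b (i + 1) * (1-p) ^ i * p * b (k + 1 - i) * (1-q) ^ (k + 1 - i))
            * (b 0 * b 0)
           - b i * (1-p) ^ i * b (k + 1 - i) * (1-q) ^ (k + 1 - i) * (b 0 * b 1 * (p + q))) =
          ((1-p) ^ (k+1) * p + (1-q) ^ (k+1) * q) * (b 0 * b 0)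
            * ((((k:ℝ) + 1) + 1) * b (k + 1 + 1) * b 0 - b 1 * b (k + 1)) := by
        rw [Finset.sum_range_succ, Finset.sum_range_succ']
        have hmid : ∑ i ∈ range k,
            ((b (i+1) * (1-p) ^ (i+1) * (((k + 1 - (i+1) : ℕ) : ℝ) + 1) * b (k + 1 - (i+1) + 1) * (1-q) ^ (k + 1 - (i+1)) * q
               + (((i + 1 : ℕ) : ℝ) + 1) * b ((i+1) + 1) * (1-p) ^ (i+1) * p * b (k + 1 - (i+1)) * (1-q) ^ (k + 1 - (i+1)))
              * (b 0 * b 0)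
             - b (i+1) * (1-p) ^ (i+1) * b (k + 1 - (i+1)) * (1-q) ^ (k + 1 - (i+1)) * (b 0 * b 1 * (p + q))) = 0 := by
          refine Finset.sum_eq_zero fun i hi => ?_
          have hik : i < k := Finset.mem_range.mp hi
          have h1 : k + 1 - (i + 1) = k - i := by omega
          have h2 : k - i + 1 = k - i + 1 := rfl
          rw [h1]
          have IH1 : (((k - i : ℕ) : ℝ) + 1) * b ((k - i) + 1) * b 0 = b 1 * b (k - i) :=
            IH (k - i) (by omega)
          have IH2 : (((i + 1 : ℕ) : ℝ)) * b (i + 1) * b 0 = b 1 * b i := by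
            have := IH i (by omega); push_cast at this ⊢; linarith [this]
          have IH2' : (((i : ℕ) : ℝ) + 1 + 1) * b (i + 1 + 1) * b 0 = b 1 * b (i + 1) := by
            have := IH (i + 1) (by omega); push_cast at this ⊢; linarith [this]
          push_cast
          linear_combination
            (b (i+1) * (1-p) ^ (i+1) * (1-q) ^ (k-i) * q * b 0) * IH1
            + ((1-p) ^ (i+1) * p * b (k-i) * (1-q) ^ (k-i) * b 0) * IH2'
        rw [hmid]
        have hz : k + 1 - 0 = k + 1 := rfl
        have htop : k + 1 - (k + 1) = 0 := by omega
        rw [hz, htop]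
        push_cast
        ring
      have hE0 : ∑ i ∈ range (k + 1 + 1),
          ((b i * (1-p) ^ i * (((k + 1 - i : ℕ) : ℝ) + 1) * b (k + 1 - i + 1) * (1-q) ^ (k + 1 - i) * q
             + ((i : ℝ) + 1) * b (i + 1) * (1-p) ^ i * p * b (k + 1 - i) * (1-q) ^ (k + 1 - i))
            * (b 0 * b 0)
           - b i * (1-p) ^ i * b (k + 1 - i) * (1-q) ^ (k + 1 - i) * (b 0 * b 1 * (p + q))) = 0 := by
        rw [Finset.sum_sub_distrib, H, sub_self]
      rw [hE0] at E
      have hc : 0 < (1-p) ^ (k+1) * p + (1-q) ^ (k+1) * q :=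
        add_pos (mul_pos (pow_pos (by linarith) _) hp0)
          (mul_pos (pow_pos (by linarith) _) hq0)
      have hb2 : 0 < b 0 * b 0 := by positivity
      have hzero : (((k:ℝ) + 1) + 1) * b (k + 1 + 1) * b 0 - b 1 * b (k + 1) = 0 :=
        (mul_eq_zero.mp E.symm).resolve_left (mul_ne_zero hc.ne' hb2.ne')
      simp only [Nat.succ_eq_add_one]
      push_cast
      linarith [hzero]


lemma exp_tsum (x : ℝ) : ∑' n : ℕ, x ^ n / n.factorial = Real.exp x := by
  rw [Real.exp_eq_exp_ℝ, NormedSpace.exp_eq_tsum_div]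

lemma summable_exp_series (x : ℝ) : Summable (fun n : ℕ => x ^ n / n.factorial) :=
  Real.summable_pow_div_factorial x

lemma poisson_of_rec (b : ℕ → ℝ) (hb : ∀ k, 0 ≤ b k) (hb0 : 0 < b 0)
    (hrec : ∀ k : ℕ, ((k:ℝ) + 1) * b (k + 1) * b 0 = b 1 * b k)
    (hsum : ∑' k, b k = 1) :
    ∃ l : ℝ, 0 ≤ l ∧ ∀ k : ℕ, b k = Real.exp (-l) * l ^ k / k.factorial := by
  set l : ℝ := b 1 / b 0 with hl
  have hl0 : 0 ≤ l := div_nonneg (hb 1) hb0.le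
  have hform : ∀ k : ℕ, b k = b 0 * l ^ k / k.factorial := by
    intro k
    induction k with
    | zero => simp
    | succ k ih =>
      have h := hrec k
      rw [ih] at h
      have hk : ((k:ℝ) + 1) ≠ 0 := by positivity
      have hf : ((k.factorial : ℝ)) ≠ 0 := Nat.cast_ne_zero.mpr k.factorial_ne_zero
      have : b (k + 1) = b 1 * (b 0 * l ^ k / k.factorial) / (((k:ℝ) + 1) * b 0) := by
        field_simp at h ⊢
        linarith [h]
      rw [this, Nat.factorial_succ, hl]
      push_cast
      have hb0ne : b 0 ≠ 0 := hb0.ne'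
      field_simp
      have hcan : b 0 * (b 1 / b 0) = b 1 := by field_simp
      rw [pow_succ]
      linear_combination (-(b 1 / b 0) ^ k) * hcan
  have hsum' : ∑' k : ℕ, b 0 * (l ^ k / k.factorial) = b 0 * Real.exp l := by
    rw [tsum_mul_left, exp_tsum]
  have h1 : b 0 * Real.exp l = 1 := by
    rw [← hsum', ← hsum]
    exact tsum_congr fun k => by rw [hform k]; ring
  have hb0' : b 0 = Real.exp (-l) := by
    rw [Real.exp_neg]
    exact eq_inv_of_mul_eq_one_left h1
  exact ⟨l, hl0, fun k => by rw [hform k, hb0']⟩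


/-- Poisson pmf. -/
noncomputable def poi (l : ℝ) (k : ℕ) : ℝ := Real.exp (-l) * l ^ k / k.factorial

lemma sum_div_factorial (A C : ℝ) (m : ℕ) :
    ∑ i ∈ range (m + 1), A ^ i / i.factorial * (C ^ (m - i) / (m - i).factorial)
      = (A + C) ^ m / m.factorial := by
  rw [add_pow, Finset.sum_div]
  refine Finset.sum_congr rfl fun i hi => ?_
  have him : i ≤ m := Nat.lt_succ_iff.mp (Finset.mem_range.mp hi)
  have hfact : ((m.choose i : ℝ)) * i.factorial * (m - i).factorial = m.factorial := by
    exact_mod_cast congrArg (Nat.cast (R := ℝ)) (Nat.choose_mul_factorial_mul_factorial him)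
  have h1 : ((i.factorial : ℝ)) ≠ 0 := Nat.cast_ne_zero.mpr i.factorial_ne_zero
  have h2 : (((m - i).factorial : ℝ)) ≠ 0 := Nat.cast_ne_zero.mpr (m - i).factorial_ne_zero
  have h3 : ((m.factorial : ℝ)) ≠ 0 := Nat.cast_ne_zero.mpr m.factorial_ne_zero
  field_simp
  rw [← hfact]
  ring

lemma poi_ru (l c : ℝ) (i j : ℕ) :
    ru c (poi l) i j
      = Real.exp (-l) * ((l * (1 - c)) ^ i / i.factorial) * ((l * c) ^ j / j.factorial) := by
  rw [ru, poi]
  have hfact : (((i+j).choose i : ℝ)) * i.factorial * j.factorial = (i+j).factorial := by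
    have := Nat.choose_mul_factorial_mul_factorial (Nat.le_add_right i j)
    rw [Nat.add_sub_cancel_left] at this
    exact_mod_cast congrArg (Nat.cast (R := ℝ)) this
  have h1 : ((i.factorial : ℝ)) ≠ 0 := Nat.cast_ne_zero.mpr i.factorial_ne_zero
  have h2 : ((j.factorial : ℝ)) ≠ 0 := Nat.cast_ne_zero.mpr j.factorial_ne_zero
  have h3 : (((i+j).factorial : ℝ)) ≠ 0 := Nat.cast_ne_zero.mpr (i+j).factorial_ne_zero
  field_simp
  rw [← hfact, mul_pow, mul_pow, pow_add]
  ring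

lemma poi_Jr (p q l : ℝ) (m n : ℕ) :
    Jr p q (poi l) m n
      = Real.exp (-(2*l)) * ((l * (1-p) + l * (1-q)) ^ m / m.factorial)
        * ((l * p + l * q) ^ n / n.factorial) := by
  have : Jr p q (poi l) m n
      = (Real.exp (-l) * Real.exp (-l))
        * ((∑ i ∈ range (m + 1), (l * (1-p)) ^ i / i.factorial * ((l * (1-q)) ^ (m - i) / (m - i).factorial))
        * (∑ j ∈ range (n + 1), (l * p) ^ j / j.factorial * ((l * q) ^ (n - j) / (n - j).factorial))) := by
    rw [Jr, Finset.sum_mul_sum, ← Finset.sum_product', ← Finset.sum_product', Finset.mul_sum]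
    refine Finset.sum_congr rfl fun ij hij => ?_
    rw [poi_ru, poi_ru]
    ring
  rw [this, sum_div_factorial, sum_div_factorial, ← Real.exp_add]
  ring_nf

lemma poi_Jr_summable_right (p q l : ℝ) (m : ℕ) :
    Summable (fun n => Jr p q (poi l) m n) := by
  simp only [poi_Jr]
  exact ((summable_exp_series (l * p + l * q)).mul_left _)

lemma poi_Jr_summable_left (p q l : ℝ) (n : ℕ) :
    Summable (fun m => Jr p q (poi l) m n) := by
  have : ∀ m, Jr p q (poi l) m n
      = ((l * (1-p) + l * (1-q)) ^ m / m.factorial)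
        * (Real.exp (-(2*l)) * ((l * p + l * q) ^ n / n.factorial)) := by
    intro m; rw [poi_Jr]; ring
  simp only [this]
  exact ((summable_exp_series (l * (1-p) + l * (1-q))).mul_right _)

lemma poi_Jr_rank_one (p q l : ℝ) (m n : ℕ) :
    (∑' n', Jr p q (poi l) m n') * (∑' m', Jr p q (poi l) m' n) = Jr p q (poi l) m n := by
  have h1 : ∑' n', Jr p q (poi l) m n'
      = Real.exp (-(2*l)) * ((l * (1-p) + l * (1-q)) ^ m / m.factorial) * Real.exp (l * p + l * q) := by
    simp only [poi_Jr]
    rw [tsum_mul_left, exp_tsum]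
  have h2 : ∑' m', Jr p q (poi l) m' n
      = Real.exp (-(2*l)) * Real.exp (l * (1-p) + l * (1-q)) * ((l * p + l * q) ^ n / n.factorial) := by
    have : ∀ m', Jr p q (poi l) m' n
        = ((l * (1-p) + l * (1-q)) ^ m' / m'.factorial)
          * (Real.exp (-(2*l)) * ((l * p + l * q) ^ n / n.factorial)) := by
      intro m'; rw [poi_Jr]; ring
    simp only [this]
    rw [tsum_mul_right, exp_tsum]
    ring
  rw [h1, h2, poi_Jr]
  rw [show (-(2*l)) = -l + -l by ring, Real.exp_add]
  have key : Real.exp (l * p + l * q) * (Real.exp (l * (1-p) + l * (1-q))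
      * (Real.exp (-l) * Real.exp (-l))) = 1 := by
    rw [← Real.exp_add, ← Real.exp_add, ← Real.exp_add, show l * p + l * q
      + (l * (1-p) + l * (1-q) + (-l + -l)) = 0 by ring, Real.exp_zero]
  linear_combination (Real.exp (-l) * Real.exp (-l) * ((l * (1 - p) + l * (1 - q)) ^ m / (m.factorial : ℝ))
    * ((l * p + l * q) ^ n / (n.factorial : ℝ))) * key

lemma ru_nonneg {c : ℝ} (hc0 : 0 ≤ c) (hc1 : c ≤ 1) {b : ℕ → ℝ} (hb : ∀ k, 0 ≤ b k)
    (i j : ℕ) : 0 ≤ ru c b i j := by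
  have h1 : (0:ℝ) ≤ 1 - c := by linarith
  have h2 := hb (i + j)
  rw [ru]
  positivity

lemma Jr_nonneg {p q : ℝ} (hp0 : 0 ≤ p) (hp1 : p ≤ 1) (hq0 : 0 ≤ q) (hq1 : q ≤ 1)
    {b : ℕ → ℝ} (hb : ∀ k, 0 ≤ b k) (m n : ℕ) : 0 ≤ Jr p q b m n :=
  Finset.sum_nonneg fun i _ => Finset.sum_nonneg fun j _ =>
    mul_nonneg (ru_nonneg hp0 hp1 hb i j) (ru_nonneg hq0 hq1 hb (m-i) (n-j))

lemma poi_nonneg {l : ℝ} (hl : 0 ≤ l) (k : ℕ) : 0 ≤ poi l k := by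
  rw [poi]; positivity

lemma term_ofReal {c : ℝ} (hc0 : 0 ≤ c) (hc1 : c ≤ 1) (A : ENNReal) (hA : A ≠ ⊤) (i j : ℕ) :
    A * ((((i+j).choose i : ℕ) : ENNReal) * ENNReal.ofReal (1-c) ^ i * ENNReal.ofReal c ^ j)
    = ENNReal.ofReal (A.toReal * (((i+j).choose i : ℕ) : ℝ) * (1-c) ^ i * c ^ j) := by
  have h1 : (0:ℝ) ≤ 1 - c := by linarith
  have h2 : (0:ℝ) ≤ A.toReal := ENNReal.toReal_nonneg
  rw [ENNReal.ofReal_mul (by positivity), ENNReal.ofReal_mul (by positivity),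
    ENNReal.ofReal_mul h2, ENNReal.ofReal_pow h1, ENNReal.ofReal_pow hc0,
    ENNReal.ofReal_natCast, ENNReal.ofReal_toReal hA]
  ring



variable {Ω : Type*} [MeasurableSpace Ω] (μ : Measure Ω) [IsProbabilityMeasure μ]
variable (X Y : Ω → ℕ) (ε εt : ℕ → Ω → ℕ)

/-- the combined family of random variables, as in the theorem statement. -/
def fam : ℕ → Ω → ℕ := fun i : ℕ => if i = 0 then X else if i = 1 then Y
  else if (i - 2) % 2 = 0 then ε ((i - 2) / 2) else εt ((i - 2) / 2)

lemma fam_zero : fam X Y ε εt 0 = X := rfl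

lemma fam_one : fam X Y ε εt 1 = Y := rfl

lemma fam_even (j : ℕ) : fam X Y ε εt (2 * j + 2) = ε j := by
  show (if 2 * j + 2 = 0 then X else if 2 * j + 2 = 1 then Y
    else if (2 * j + 2 - 2) % 2 = 0 then ε ((2 * j + 2 - 2) / 2)
    else εt ((2 * j + 2 - 2) / 2)) = ε j
  rw [if_neg (by omega), if_neg (by omega), if_pos (by omega),
    show (2 * j + 2 - 2) / 2 = j by omega]

lemma fam_odd (j : ℕ) : fam X Y ε εt (2 * j + 3) = εt j := by
  show (if 2 * j + 3 = 0 then X else if 2 * j + 3 = 1 then Y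
    else if (2 * j + 3 - 2) % 2 = 0 then ε ((2 * j + 3 - 2) / 2)
    else εt ((2 * j + 3 - 2) / 2)) = εt j
  rw [if_neg (by omega), if_neg (by omega), if_neg (by omega),
    show (2 * j + 3 - 2) / 2 = j by omega]

/-- Bernoulli weight. -/
noncomputable def w (c : ℝ) (k : ℕ) : ENNReal :=
  if k = 1 then ENNReal.ofReal (1 - c) else ENNReal.ofReal c

lemma meas_bernoulli {c : ℝ} (hc0 : 0 < c) (hc1 : c < 1) {e : Ω → ℕ}
    (hm : Measurable e) (h01 : ∀ ω, e ω ≤ 1)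
    (hP : μ {ω | e ω = 1} = ENNReal.ofReal (1 - c)) (k : ℕ) (hk : k ≤ 1) :
    μ {ω | e ω = k} = w c k := by
  interval_cases k
  · have hcompl : {ω | e ω = 0} = {ω | e ω = 1}ᶜ := by
      ext ω; have := h01 ω; simp only [Set.mem_compl_iff, Set.mem_setOf_eq]; omega
    have hms : MeasurableSet {ω | e ω = 1} := hm (measurableSet_singleton 1)
    rw [w, if_neg (by omega), hcompl, measure_compl hms (measure_ne_top μ _), hP,
      measure_univ]
    have hsum : ENNReal.ofReal c + ENNReal.ofReal (1 - c) = 1 := by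
      rw [← ENNReal.ofReal_add hc0.le (by linarith)]
      norm_num
    exact ENNReal.sub_eq_of_eq_add (by simp) hsum.symm
  · rw [w, if_pos rfl, hP]


lemma cylinder_meas
    {p q : ℝ} (hp0 : 0 < p) (hp1 : p < 1) (hq0 : 0 < q) (hq1 : q < 1)
    (hεm : ∀ j, Measurable (ε j)) (hεtm : ∀ j, Measurable (εt j))
    (hε01 : ∀ j ω, ε j ω ≤ 1) (hεt01 : ∀ j ω, εt j ω ≤ 1)
    (hεP : ∀ j, μ {ω | ε j ω = 1} = ENNReal.ofReal (1 - p))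
    (hεtP : ∀ j, μ {ω | εt j ω = 1} = ENNReal.ofReal (1 - q))
    (hindep : iIndepFun (fam X Y ε εt) μ)
    (n m : ℕ) (e d : ℕ → ℕ) (he : ∀ j, e j ≤ 1) (hd : ∀ j, d j ≤ 1) :
    μ ({ω | X ω = n} ∩ {ω | Y ω = m} ∩ (⋂ j ∈ Finset.range n, {ω | ε j ω = e j})
       ∩ (⋂ j ∈ Finset.range m, {ω | εt j ω = d j}))
    = μ {ω | X ω = n} * μ {ω | Y ω = m} * (∏ j ∈ Finset.range n, w p (e j))
      * (∏ j ∈ Finset.range m, w q (d j)) := by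
  classical
  set T : ℕ → Set ℕ := fun i => if i = 0 then {n} else if i = 1 then {m}
    else if (i - 2) % 2 = 0 then {e ((i - 2) / 2)} else {d ((i - 2) / 2)} with hT
  set s : ℕ → Set Ω := fun i => fam X Y ε εt i ⁻¹' T i with hs
  set S : Finset ℕ := (({0, 1} : Finset ℕ) ∪ (Finset.range n).image (fun j => 2*j+2))
    ∪ (Finset.range m).image (fun j => 2*j+3) with hS
  have key := hindep.meas_biInter (S := S) (s := s) (fun i _ => ⟨T i, .of_discrete, rfl⟩)
  -- identify the individual sets
  have hs0 : s 0 = {ω | X ω = n} := rfl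
  have hs1 : s 1 = {ω | Y ω = m} := rfl
  have hse : ∀ j, s (2*j+2) = {ω | ε j ω = e j} := by
    intro j
    have hT2 : T (2*j+2) = {e j} := by
      rw [hT]
      simp only
      rw [if_neg (by omega), if_neg (by omega), if_pos (by omega),
        show (2*j+2-2)/2 = j by omega]
    rw [hs]
    simp only
    rw [hT2, fam_even]
    rfl
  have hso : ∀ j, s (2*j+3) = {ω | εt j ω = d j} := by
    intro j
    have hT2 : T (2*j+3) = {d j} := by
      rw [hT]
      simp only
      rw [if_neg (by omega), if_neg (by omega), if_neg (by omega),
        show (2*j+3-2)/2 = j by omega]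
    rw [hs]
    simp only
    rw [hT2, fam_odd]
    rfl
  -- the intersection over S is the event in question
  have hset : (⋂ i ∈ S, s i) = {ω | X ω = n} ∩ {ω | Y ω = m}
      ∩ (⋂ j ∈ Finset.range n, {ω | ε j ω = e j})
      ∩ (⋂ j ∈ Finset.range m, {ω | εt j ω = d j}) := by
    rw [← Finset.set_biInter_coe, hS, Finset.coe_union, Finset.coe_union,
      Set.biInter_union, Set.biInter_union, Finset.coe_image, Set.biInter_image,
      Finset.coe_image, Set.biInter_image]
    have h01 : (⋂ i ∈ (↑({0,1} : Finset ℕ) : Set ℕ), s i) = {ω | X ω = n} ∩ {ω | Y ω = m} := by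
      simp only [Finset.coe_insert, Finset.coe_singleton, Set.biInter_insert,
        Set.biInter_singleton, hs0, hs1]
    rw [h01]
    congr 1
    · congr 1
      rw [← Finset.set_biInter_coe]
      exact Set.iInter₂_congr fun j _ => hse j
    · rw [← Finset.set_biInter_coe]
      exact Set.iInter₂_congr fun j _ => hso j
  -- disjointness for the product
  have hdisj1 : Disjoint ({0, 1} : Finset ℕ) ((Finset.range n).image (fun j => 2*j+2)) := by
    rw [Finset.disjoint_left]
    intro a ha hb
    simp only [Finset.mem_insert, Finset.mem_singleton] at ha
    simp only [Finset.mem_image, Finset.mem_range] at hb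
    obtain ⟨j, _, hj⟩ := hb
    omega
  have hdisj2 : Disjoint (({0, 1} : Finset ℕ) ∪ (Finset.range n).image (fun j => 2*j+2))
      ((Finset.range m).image (fun j => 2*j+3)) := by
    rw [Finset.disjoint_left]
    intro a ha hb
    simp only [Finset.mem_union, Finset.mem_insert, Finset.mem_singleton,
      Finset.mem_image, Finset.mem_range] at ha
    simp only [Finset.mem_image, Finset.mem_range] at hb
    obtain ⟨j, _, hj⟩ := hb
    rcases ha with (ha | ⟨j', _, hj'⟩) <;> omega
  -- evaluate the product
  have hprod : ∏ i ∈ S, μ (s i) = μ {ω | X ω = n} * μ {ω | Y ω = m}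
      * (∏ j ∈ Finset.range n, w p (e j)) * (∏ j ∈ Finset.range m, w q (d j)) := by
    rw [hS, Finset.prod_union hdisj2, Finset.prod_union hdisj1,
      Finset.prod_image (fun x _ y _ h => by omega : ∀ x ∈ Finset.range n, ∀ y ∈ Finset.range n,
        2*x+2 = 2*y+2 → x = y),
      Finset.prod_image (fun x _ y _ h => by omega : ∀ x ∈ Finset.range m, ∀ y ∈ Finset.range m,
        2*x+3 = 2*y+3 → x = y),
      Finset.prod_pair (by norm_num : (0:ℕ) ≠ 1), hs0, hs1]
    congr 1
    · congr 1
      exact Finset.prod_congr rfl fun j _ => by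
        rw [hse j]; exact meas_bernoulli μ hp0 hp1 (hεm j) (hε01 j) (hεP j) (e j) (he j)
    · exact Finset.prod_congr rfl fun j _ => by
        rw [hso j]; exact meas_bernoulli μ hq0 hq1 (hεtm j) (hεt01 j) (hεtP j) (d j) (hd j)
  rw [← hset, key, hprod]


lemma count_iff (v : ℕ → ℕ) (hv : ∀ j, v j ≤ 1) (n i : ℕ) :
    (∑ j ∈ Finset.range n, v j = i) ↔
      ∃ A ∈ Finset.powersetCard i (Finset.range n),
        ∀ j ∈ Finset.range n, v j = (if j ∈ A then 1 else 0) := by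
  classical
  constructor
  · intro hsum
    refine ⟨(Finset.range n).filter (fun j => v j = 1), ?_, ?_⟩
    · rw [Finset.mem_powersetCard]
      refine ⟨Finset.filter_subset _ _, ?_⟩
      rw [Finset.card_filter, ← hsum]
      exact (Finset.sum_congr rfl fun j _ => by have := hv j; split <;> omega).symm
    · intro j hj
      by_cases h : v j = 1
      · simp [Finset.mem_filter, hj, h]
      · have := hv j
        simp only [Finset.mem_filter, h, and_false, if_false]
        omega
  · rintro ⟨A, hA, hpat⟩
    rw [Finset.mem_powersetCard] at hA
    calc ∑ j ∈ Finset.range n, v j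
        = ∑ j ∈ Finset.range n, (if j ∈ A then 1 else 0) :=
          Finset.sum_congr rfl hpat
      _ = ((Finset.range n).filter (· ∈ A)).card := by
          rw [Finset.card_filter]
      _ = A.card := by
          congr 1
          exact Finset.filter_mem_eq_inter.trans (Finset.inter_eq_right.mpr hA.1)
      _ = i := hA.2

lemma prod_w_pattern {c : ℝ} (hc0 : 0 < c) (hc1 : c < 1) {n i : ℕ} {A : Finset ℕ}
    (hA : A ∈ Finset.powersetCard i (Finset.range n)) :
    (∏ j ∈ Finset.range n, w c (if j ∈ A then 1 else 0))
      = ENNReal.ofReal (1 - c) ^ i * ENNReal.ofReal c ^ (n - i) := by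
  classical
  rw [Finset.mem_powersetCard] at hA
  have h1 : ∀ j, w c (if j ∈ A then 1 else 0)
      = (if j ∈ A then ENNReal.ofReal (1 - c) else ENNReal.ofReal c) := by
    intro j
    by_cases h : j ∈ A
    · rw [if_pos h, if_pos h, w, if_pos rfl]
    · rw [if_neg h, if_neg h, w, if_neg (by omega)]
  simp only [h1]
  rw [Finset.prod_ite, Finset.prod_const, Finset.prod_const]
  have h2 : (Finset.range n).filter (· ∈ A) = A :=
    Finset.filter_mem_eq_inter.trans (Finset.inter_eq_right.mpr hA.1)
  have h4 := Finset.card_filter_add_card_filter_not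
    (s := Finset.range n) (p := fun j => j ∈ A)
  rw [h2] at h4
  have h3 : ((Finset.range n).filter (fun j => ¬ j ∈ A)).card = n - i := by
    rw [Finset.card_range] at h4
    omega
  rw [h2, hA.2, h3]


lemma count_meas
    {p q : ℝ} (hp0 : 0 < p) (hp1 : p < 1) (hq0 : 0 < q) (hq1 : q < 1)
    (hXm : Measurable X) (hYm : Measurable Y)
    (hεm : ∀ j, Measurable (ε j)) (hεtm : ∀ j, Measurable (εt j))
    (hε01 : ∀ j ω, ε j ω ≤ 1) (hεt01 : ∀ j ω, εt j ω ≤ 1)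
    (hεP : ∀ j, μ {ω | ε j ω = 1} = ENNReal.ofReal (1 - p))
    (hεtP : ∀ j, μ {ω | εt j ω = 1} = ENNReal.ofReal (1 - q))
    (hindep : iIndepFun (fam X Y ε εt) μ)
    (n m i i' : ℕ) :
    μ ({ω | X ω = n} ∩ {ω | Y ω = m} ∩ {ω | ∑ j ∈ Finset.range n, ε j ω = i}
       ∩ {ω | ∑ j ∈ Finset.range m, εt j ω = i'})
    = μ {ω | X ω = n} * μ {ω | Y ω = m}
      * ((n.choose i) * ENNReal.ofReal (1-p) ^ i * ENNReal.ofReal p ^ (n - i))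
      * ((m.choose i') * ENNReal.ofReal (1-q) ^ i' * ENNReal.ofReal q ^ (m - i')) := by
  classical
  set ind : Finset ℕ → ℕ → ℕ := fun A j => if j ∈ A then 1 else 0 with hind
  set cyl : Finset ℕ → Finset ℕ → Set Ω := fun A B =>
    {ω | X ω = n} ∩ {ω | Y ω = m} ∩ (⋂ j ∈ Finset.range n, {ω | ε j ω = ind A j})
      ∩ (⋂ j ∈ Finset.range m, {ω | εt j ω = ind B j}) with hcyl
  set Z := (Finset.powersetCard i (Finset.range n)) ×ˢ (Finset.powersetCard i' (Finset.range m))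
    with hZ
  have hset : ({ω | X ω = n} ∩ {ω | Y ω = m} ∩ {ω | ∑ j ∈ Finset.range n, ε j ω = i}
       ∩ {ω | ∑ j ∈ Finset.range m, εt j ω = i'}) = ⋃ z ∈ Z, cyl z.1 z.2 := by
    ext ω
    simp only [Set.mem_inter_iff, Set.mem_setOf_eq, Set.mem_iUnion, hcyl, hZ,
      Finset.mem_product, Set.mem_iInter]
    constructor
    · rintro ⟨⟨⟨hX, hY⟩, hc1⟩, hc2⟩
      obtain ⟨A, hA, hpatA⟩ := (count_iff (fun j => ε j ω) (fun j => hε01 j ω) n i).mp hc1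
      obtain ⟨B, hB, hpatB⟩ := (count_iff (fun j => εt j ω) (fun j => hεt01 j ω) m i').mp hc2
      refine ⟨(A, B), ⟨hA, hB⟩, ⟨⟨⟨hX, hY⟩, ?_⟩, ?_⟩⟩
      · intro j hj; exact hpatA j hj
      · intro j hj; exact hpatB j hj
    · rintro ⟨⟨A, B⟩, ⟨hA, hB⟩, ⟨⟨⟨hX, hY⟩, hpatA⟩, hpatB⟩⟩
      refine ⟨⟨⟨hX, hY⟩, ?_⟩, ?_⟩
      · exact (count_iff (fun j => ε j ω) (fun j => hε01 j ω) n i).mpr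
          ⟨A, hA, fun j hj => hpatA j hj⟩
      · exact (count_iff (fun j => εt j ω) (fun j => hεt01 j ω) m i').mpr
          ⟨B, hB, fun j hj => hpatB j hj⟩
  have hdisj : (↑Z : Set (Finset ℕ × Finset ℕ)).PairwiseDisjoint (fun z => cyl z.1 z.2) := by
    rintro ⟨A, B⟩ hz ⟨A', B'⟩ hz' hne
    rw [Finset.mem_coe, hZ, Finset.mem_product] at hz
    rw [Finset.mem_coe, hZ, Finset.mem_product] at hz'
    simp only [Function.onFun]
    rw [Set.disjoint_left]
    rintro ω hω hω'
    simp only [hcyl, Set.mem_inter_iff, Set.mem_iInter, Set.mem_setOf_eq] at hω hω'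
    apply hne
    have hAsub := (Finset.mem_powersetCard.mp hz.1).1
    have hA'sub := (Finset.mem_powersetCard.mp hz'.1).1
    have hBsub := (Finset.mem_powersetCard.mp hz.2).1
    have hB'sub := (Finset.mem_powersetCard.mp hz'.2).1
    have hAA : A = A' := by
      ext j
      by_cases hj : j ∈ Finset.range n
      · have h1 := hω.1.2 j hj
        have h2 := hω'.1.2 j hj
        rw [h1] at h2
        simp only [hind] at h2
        constructor <;> intro hmem
        · by_contra hc
          rw [if_pos hmem, if_neg hc] at h2; omega
        · by_contra hc
          rw [if_neg hc, if_pos hmem] at h2; omega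
      · constructor <;> intro hmem
        · exact absurd (hAsub hmem) hj
        · exact absurd (hA'sub hmem) hj
    have hBB : B = B' := by
      ext j
      by_cases hj : j ∈ Finset.range m
      · have h1 := hω.2 j hj
        have h2 := hω'.2 j hj
        rw [h1] at h2
        simp only [hind] at h2
        constructor <;> intro hmem
        · by_contra hc
          rw [if_pos hmem, if_neg hc] at h2; omega
        · by_contra hc
          rw [if_neg hc, if_pos hmem] at h2; omega
      · constructor <;> intro hmem
        · exact absurd (hBsub hmem) hj
        · exact absurd (hB'sub hmem) hj
    rw [hAA, hBB]
  have hmeas : ∀ z ∈ Z, MeasurableSet (cyl z.1 z.2) := by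
    rintro ⟨A, B⟩ _
    refine MeasurableSet.inter (MeasurableSet.inter (MeasurableSet.inter ?_ ?_) ?_) ?_
    · exact hXm (measurableSet_singleton n)
    · exact hYm (measurableSet_singleton m)
    · exact MeasurableSet.biInter (Set.to_countable _)
        (fun j _ => hεm j (measurableSet_singleton (ind A j)))
    · exact MeasurableSet.biInter (Set.to_countable _)
        (fun j _ => hεtm j (measurableSet_singleton (ind B j)))
  rw [hset, measure_biUnion_finset hdisj hmeas]
  have hval : ∀ z ∈ Z, μ (cyl z.1 z.2) = μ {ω | X ω = n} * μ {ω | Y ω = m}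
      * (ENNReal.ofReal (1-p) ^ i * ENNReal.ofReal p ^ (n - i))
      * (ENNReal.ofReal (1-q) ^ i' * ENNReal.ofReal q ^ (m - i')) := by
    rintro ⟨A, B⟩ hz
    simp only [hZ, Finset.mem_product] at hz
    rw [hcyl]
    simp only
    rw [cylinder_meas μ X Y ε εt hp0 hp1 hq0 hq1 hεm hεtm hε01 hεt01 hεP hεtP hindep n m
      (ind A) (ind B)
      (fun j => by show (if j ∈ A then 1 else 0) ≤ 1; split <;> omega)
      (fun j => by show (if j ∈ B then 1 else 0) ≤ 1; split <;> omega),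
      prod_w_pattern hp0 hp1 hz.1, prod_w_pattern hq0 hq1 hz.2]
  rw [Finset.sum_congr rfl hval, Finset.sum_const, hZ, Finset.card_product,
    Finset.card_powersetCard, Finset.card_powersetCard, Finset.card_range, Finset.card_range,
    nsmul_eq_mul]
  push_cast
  ring


lemma sum_one_sub (v : ℕ → ℕ) (hv : ∀ t, v t ≤ 1) (n : ℕ) :
    (∑ t ∈ Finset.range n, v t) + (∑ t ∈ Finset.range n, (1 - v t)) = n := by
  rw [← Finset.sum_add_distrib]
  calc ∑ t ∈ Finset.range n, (v t + (1 - v t)) = ∑ _t ∈ Finset.range n, 1 :=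
        Finset.sum_congr rfl fun t _ => by have := hv t; omega
    _ = n := by simp

lemma tuple_meas
    {p q : ℝ} (hp0 : 0 < p) (hp1 : p < 1) (hq0 : 0 < q) (hq1 : q < 1)
    (hXm : Measurable X) (hYm : Measurable Y)
    (hεm : ∀ j, Measurable (ε j)) (hεtm : ∀ j, Measurable (εt j))
    (hε01 : ∀ j ω, ε j ω ≤ 1) (hεt01 : ∀ j ω, εt j ω ≤ 1)
    (hεP : ∀ j, μ {ω | ε j ω = 1} = ENNReal.ofReal (1 - p))
    (hεtP : ∀ j, μ {ω | εt j ω = 1} = ENNReal.ofReal (1 - q))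
    (hindep : iIndepFun (fam X Y ε εt) μ)
    (i j i' j' : ℕ) :
    μ {ω | (∑ t ∈ Finset.range (X ω), ε t ω) = i ∧ (∑ t ∈ Finset.range (X ω), (1 - ε t ω)) = j
         ∧ (∑ t ∈ Finset.range (Y ω), εt t ω) = i' ∧ (∑ t ∈ Finset.range (Y ω), (1 - εt t ω)) = j'}
    = (μ {ω | X ω = i + j} * (((i+j).choose i) * ENNReal.ofReal (1-p) ^ i * ENNReal.ofReal p ^ j))
      * (μ {ω | Y ω = i' + j'}
         * (((i'+j').choose i') * ENNReal.ofReal (1-q) ^ i' * ENNReal.ofReal q ^ j')) := by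
  have hset : {ω | (∑ t ∈ Finset.range (X ω), ε t ω) = i
        ∧ (∑ t ∈ Finset.range (X ω), (1 - ε t ω)) = j
        ∧ (∑ t ∈ Finset.range (Y ω), εt t ω) = i'
        ∧ (∑ t ∈ Finset.range (Y ω), (1 - εt t ω)) = j'}
      = {ω | X ω = i + j} ∩ {ω | Y ω = i' + j'}
        ∩ {ω | ∑ t ∈ Finset.range (i + j), ε t ω = i}
        ∩ {ω | ∑ t ∈ Finset.range (i' + j'), εt t ω = i'} := by
    ext ω
    simp only [Set.mem_setOf_eq, Set.mem_inter_iff]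
    have hX := sum_one_sub (fun t => ε t ω) (fun t => hε01 t ω) (X ω)
    have hY := sum_one_sub (fun t => εt t ω) (fun t => hεt01 t ω) (Y ω)
    constructor
    · rintro ⟨h1, h2, h3, h4⟩
      have hXω : X ω = i + j := by omega
      have hYω : Y ω = i' + j' := by omega
      refine ⟨⟨⟨hXω, hYω⟩, ?_⟩, ?_⟩
      · rw [← hXω]; exact h1
      · rw [← hYω]; exact h3
    · rintro ⟨⟨⟨hXω, hYω⟩, h1⟩, h2⟩
      have h1' : (∑ t ∈ Finset.range (X ω), ε t ω) = i := by rw [hXω]; exact h1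
      have h2' : (∑ t ∈ Finset.range (Y ω), εt t ω) = i' := by rw [hYω]; exact h2
      exact ⟨h1', by omega, h2', by omega⟩
  rw [hset, count_meas μ X Y ε εt hp0 hp1 hq0 hq1 hXm hYm hεm hεtm hε01 hεt01 hεP hεtP hindep,
    Nat.add_sub_cancel_left, Nat.add_sub_cancel_left]
  ring

lemma measurable_sumrange (hXm : Measurable X) {v : ℕ → Ω → ℕ} (hv : ∀ t, Measurable (v t)) :
    Measurable (fun ω => ∑ t ∈ Finset.range (X ω), v t ω) := by
  apply measurable_to_countable'
  intro k
  have hset : (fun ω => ∑ t ∈ Finset.range (X ω), v t ω) ⁻¹' {k}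
      = ⋃ n, ({ω | X ω = n} ∩ {ω | ∑ t ∈ Finset.range n, v t ω = k}) := by
    ext ω
    simp only [Set.mem_preimage, Set.mem_singleton_iff, Set.mem_iUnion, Set.mem_inter_iff,
      Set.mem_setOf_eq]
    constructor
    · intro h; exact ⟨X ω, rfl, h⟩
    · rintro ⟨n, hn, h⟩; rw [← hn] at h; exact h
  rw [hset]
  exact MeasurableSet.iUnion fun n => (hXm (measurableSet_singleton n)).inter
    ((Finset.measurable_sum (Finset.range n) (fun t _ => hv t)) (measurableSet_singleton k))

lemma meas_fiber_tsum {f g : Ω → ℕ} (hf : Measurable f) (hg : Measurable g) (m : ℕ) :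
    μ {ω | f ω = m} = ∑' n, μ {ω | f ω = m ∧ g ω = n} := by
  have hset : {ω | f ω = m} = ⋃ n, {ω | f ω = m ∧ g ω = n} := by
    ext ω
    simp only [Set.mem_setOf_eq, Set.mem_iUnion]
    exact ⟨fun h => ⟨g ω, h, rfl⟩, fun ⟨n, h, _⟩ => h⟩
  rw [hset, measure_iUnion]
  · intro a b hab
    simp only [Function.onFun]
    rw [Set.disjoint_left]
    rintro ω ⟨_, ha⟩ ⟨_, hb⟩
    exact hab (ha ▸ hb ▸ rfl)
  · intro n
    exact (hf (measurableSet_singleton m)).inter (hg (measurableSet_singleton n))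

lemma meas_fiber_tsum' {f g : Ω → ℕ} (hf : Measurable f) (hg : Measurable g) (n : ℕ) :
    μ {ω | g ω = n} = ∑' m, μ {ω | f ω = m ∧ g ω = n} := by
  have hset : {ω | g ω = n} = ⋃ m, {ω | f ω = m ∧ g ω = n} := by
    ext ω
    simp only [Set.mem_setOf_eq, Set.mem_iUnion]
    exact ⟨fun h => ⟨f ω, rfl, h⟩, fun ⟨m, _, h⟩ => h⟩
  rw [hset, measure_iUnion]
  · intro a b hab
    simp only [Function.onFun]
    rw [Set.disjoint_left]
    rintro ω ⟨ha, _⟩ ⟨hb, _⟩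
    exact hab (ha ▸ hb ▸ rfl)
  · intro m
    exact (hf (measurableSet_singleton m)).inter (hg (measurableSet_singleton n))

lemma tsum_fiber_one {f : Ω → ℕ} (hf : Measurable f) : ∑' k, μ {ω | f ω = k} = 1 := by
  have hset : (⋃ k, {ω | f ω = k}) = Set.univ := by
    ext ω
    simp only [Set.mem_iUnion, Set.mem_setOf_eq, Set.mem_univ, iff_true]
    exact ⟨f ω, rfl⟩
  rw [← measure_univ (μ := μ), ← hset, measure_iUnion]
  · intro a b hab
    simp only [Function.onFun]
    rw [Set.disjoint_left]
    rintro ω ha hb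
    exact hab (ha ▸ hb ▸ rfl)
  · intro k
    exact hf (measurableSet_singleton k)


lemma J_decomp
    {p q : ℝ} (hp0 : 0 < p) (hp1 : p < 1) (hq0 : 0 < q) (hq1 : q < 1)
    (hXm : Measurable X) (hYm : Measurable Y)
    (hεm : ∀ j, Measurable (ε j)) (hεtm : ∀ j, Measurable (εt j))
    (hε01 : ∀ j ω, ε j ω ≤ 1) (hεt01 : ∀ j ω, εt j ω ≤ 1)
    (hεP : ∀ j, μ {ω | ε j ω = 1} = ENNReal.ofReal (1 - p))
    (hεtP : ∀ j, μ {ω | εt j ω = 1} = ENNReal.ofReal (1 - q))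
    (hindep : iIndepFun (fam X Y ε εt) μ)
    (m n : ℕ) :
    μ {ω | (∑ t ∈ Finset.range (X ω), ε t ω) + (∑ t ∈ Finset.range (Y ω), εt t ω) = m
         ∧ (∑ t ∈ Finset.range (X ω), (1 - ε t ω)) + (∑ t ∈ Finset.range (Y ω), (1 - εt t ω)) = n}
    = ∑ i ∈ Finset.range (m+1), ∑ j ∈ Finset.range (n+1),
        (μ {ω | X ω = i + j} * (((i+j).choose i) * ENNReal.ofReal (1-p) ^ i * ENNReal.ofReal p ^ j))
        * (μ {ω | Y ω = (m-i) + (n-j)}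
           * ((((m-i)+(n-j)).choose (m-i)) * ENNReal.ofReal (1-q) ^ (m-i) * ENNReal.ofReal q ^ (n-j))) := by
  classical
  set Z := (Finset.range (m+1)) ×ˢ (Finset.range (n+1)) with hZ
  set tup : ℕ → ℕ → Set Ω := fun i j =>
    {ω | (∑ t ∈ Finset.range (X ω), ε t ω) = i ∧ (∑ t ∈ Finset.range (X ω), (1 - ε t ω)) = j
       ∧ (∑ t ∈ Finset.range (Y ω), εt t ω) = m - i
       ∧ (∑ t ∈ Finset.range (Y ω), (1 - εt t ω)) = n - j} with htup
  have hset : {ω | (∑ t ∈ Finset.range (X ω), ε t ω) + (∑ t ∈ Finset.range (Y ω), εt t ω) = m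
         ∧ (∑ t ∈ Finset.range (X ω), (1 - ε t ω)) + (∑ t ∈ Finset.range (Y ω), (1 - εt t ω)) = n}
      = ⋃ z ∈ Z, tup z.1 z.2 := by
    ext ω
    simp only [Set.mem_setOf_eq, Set.mem_iUnion, htup, hZ, Finset.mem_product,
      Finset.mem_range]
    constructor
    · rintro ⟨h1, h2⟩
      exact ⟨(∑ t ∈ Finset.range (X ω), ε t ω, ∑ t ∈ Finset.range (X ω), (1 - ε t ω)),
        ⟨by omega, by omega⟩, rfl, rfl, by omega, by omega⟩
    · rintro ⟨⟨i, j⟩, ⟨hi, hj⟩, h1, h2, h3, h4⟩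
      constructor <;> omega
  have hdisj : (↑Z : Set (ℕ × ℕ)).PairwiseDisjoint (fun z => tup z.1 z.2) := by
    rintro ⟨a, b⟩ _ ⟨a', b'⟩ _ hne
    simp only [Function.onFun]
    rw [Set.disjoint_left]
    rintro ω ⟨h1, h2, _⟩ ⟨h1', h2', _⟩
    exact hne (by rw [Prod.mk.injEq]; omega)
  have hmeas : ∀ z ∈ Z, MeasurableSet (tup z.1 z.2) := by
    rintro ⟨a, b⟩ _
    have hS1 := measurable_sumrange X hXm hεm
    have hS2 := measurable_sumrange X hXm
      (fun t => (Measurable.of_discrete (f := fun x : ℕ => 1 - x)).comp (hεm t))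
    have hS3 := measurable_sumrange Y hYm hεtm
    have hS4 := measurable_sumrange Y hYm
      (fun t => (Measurable.of_discrete (f := fun x : ℕ => 1 - x)).comp (hεtm t))
    have : tup a b = (fun ω => ∑ t ∈ Finset.range (X ω), ε t ω) ⁻¹' {a}
        ∩ ((fun ω => ∑ t ∈ Finset.range (X ω), (1 - ε t ω)) ⁻¹' {b}
        ∩ ((fun ω => ∑ t ∈ Finset.range (Y ω), εt t ω) ⁻¹' {m - a}
        ∩ (fun ω => ∑ t ∈ Finset.range (Y ω), (1 - εt t ω)) ⁻¹' {n - b})) := by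
      ext ω; simp [htup, Set.mem_setOf_eq]
    rw [this]
    exact (hS1 (measurableSet_singleton a)).inter ((hS2 (measurableSet_singleton b)).inter
      ((hS3 (measurableSet_singleton (m - a))).inter (hS4 (measurableSet_singleton (n - b)))))
  rw [hset, measure_biUnion_finset hdisj hmeas]
  rw [hZ, Finset.sum_product]
  refine Finset.sum_congr rfl fun i hi => Finset.sum_congr rfl fun j hj => ?_
  exact tuple_meas μ X Y ε εt hp0 hp1 hq0 hq1 hXm hYm hεm hεtm hε01 hεt01 hεP hεtP hindep
    i j (m - i) (n - j)


lemma indep_of_pmf_factor {f g : Ω → ℕ} (hf : Measurable f) (hg : Measurable g)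
    (h : ∀ m n, μ {ω | f ω = m ∧ g ω = n} = μ {ω | f ω = m} * μ {ω | g ω = n}) :
    IndepFun f g μ := by
  rw [indepFun_iff_measure_inter_preimage_eq_mul]
  intro s t _ _
  have hsplit1 : ∀ (u : Set ℕ), f ⁻¹' u = ⋃ m : u, {ω | f ω = (m : ℕ)} := by
    intro u
    ext ω
    simp only [Set.mem_preimage, Set.mem_iUnion, Set.mem_setOf_eq, Subtype.exists,
      exists_prop]
    exact ⟨fun hm => ⟨f ω, hm, rfl⟩, fun ⟨m, hm, he⟩ => he ▸ hm⟩
  have hdisj : ∀ (u : Set ℕ) (V : ℕ → Set Ω), Pairwise (Function.onFun Disjoint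
      (fun m : u => {ω | f ω = (m : ℕ)} ∩ V (m : ℕ))) := by
    intro u V a b hab
    simp only [Function.onFun]
    rw [Set.disjoint_left]
    rintro ω ⟨ha, _⟩ ⟨hb, _⟩
    exact hab (Subtype.ext (ha ▸ hb ▸ rfl))
  -- decompose f-side
  have hft : f ⁻¹' s ∩ g ⁻¹' t = ⋃ m : s, ({ω | f ω = (m : ℕ)} ∩ g ⁻¹' t) := by
    rw [hsplit1 s, Set.iUnion_inter]
  have hgt : ∀ m : ℕ, {ω | f ω = m} ∩ g ⁻¹' t = ⋃ n : t, {ω | f ω = m ∧ g ω = (n : ℕ)} := by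
    intro m
    ext ω
    simp only [Set.mem_inter_iff, Set.mem_setOf_eq, Set.mem_preimage, Set.mem_iUnion,
      Subtype.exists, exists_prop]
    constructor
    · rintro ⟨h1, h2⟩; exact ⟨g ω, h2, h1, rfl⟩
    · rintro ⟨n, hn, h1, h2⟩; exact ⟨h1, h2 ▸ hn⟩
  have hdisj2 : ∀ m : ℕ, Pairwise (Function.onFun Disjoint
      (fun n : t => {ω | f ω = m ∧ g ω = (n : ℕ)})) := by
    intro m a b hab
    simp only [Function.onFun]
    rw [Set.disjoint_left]
    rintro ω ⟨_, ha⟩ ⟨_, hb⟩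
    exact hab (Subtype.ext (ha ▸ hb ▸ rfl))
  have hmeas2 : ∀ (m : ℕ), ∀ n : t, MeasurableSet {ω | f ω = m ∧ g ω = (n : ℕ)} := by
    intro m n
    exact (hf (measurableSet_singleton m)).inter (hg (measurableSet_singleton (n : ℕ)))
  have hval : ∀ m : ℕ, μ ({ω | f ω = m} ∩ g ⁻¹' t) = μ {ω | f ω = m} * μ (g ⁻¹' t) := by
    intro m
    have hgdec : g ⁻¹' t = ⋃ n : t, {ω | g ω = (n : ℕ)} := by
      ext ω
      simp only [Set.mem_preimage, Set.mem_iUnion, Set.mem_setOf_eq, Subtype.exists,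
        exists_prop]
      exact ⟨fun hn => ⟨g ω, hn, rfl⟩, fun ⟨n, hn, he⟩ => he ▸ hn⟩
    have hgdisj : Pairwise (Function.onFun Disjoint (fun n : t => {ω | g ω = (n : ℕ)})) := by
      intro a b hab
      simp only [Function.onFun]
      rw [Set.disjoint_left]
      rintro ω ha hb
      exact hab (Subtype.ext (ha ▸ hb ▸ rfl))
    rw [hgt m, measure_iUnion (hdisj2 m) (hmeas2 m), hgdec,
      measure_iUnion hgdisj (fun n => hg (measurableSet_singleton (n : ℕ))),
      ← ENNReal.tsum_mul_left]
    exact tsum_congr fun n => h m (n : ℕ)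
  have hfs : μ (f ⁻¹' s) = ∑' m : s, μ {ω | f ω = (m : ℕ)} := by
    rw [hsplit1 s]
    refine measure_iUnion ?_ (fun m => hf (measurableSet_singleton (m : ℕ)))
    intro a b hab
    simp only [Function.onFun]
    rw [Set.disjoint_left]
    rintro ω ha hb
    simp only [Set.mem_setOf_eq] at ha hb
    exact hab (Subtype.ext (ha ▸ hb ▸ rfl))
  rw [hft, measure_iUnion (hdisj s (fun _ => g ⁻¹' t))
    (fun m => (hf (measurableSet_singleton (m : ℕ))).inter (hg .of_discrete)),
    hfs, ← ENNReal.tsum_mul_right]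
  exact tsum_congr fun m => hval (m : ℕ)


end PoiChar

open PoiChar

/-- The linear forms `K₁ = X̃_{1-p} + Ỹ_{1-q}` and `K₂ = X̃_p + Ỹ_q` are
independent if and only if `X` is Poisson distributed. -/
theorem indep_linear_forms_iff_poisson
    {Ω : Type*} [MeasurableSpace Ω] (μ : Measure Ω) [IsProbabilityMeasure μ]
    (p q : ℝ) (hp0 : 0 < p) (hp1 : p < 1) (hq0 : 0 < q) (hq1 : q < 1)
    (X Y : Ω → ℕ) (ε εt : ℕ → Ω → ℕ)
    (hXm : Measurable X) (hYm : Measurable Y)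
    (hεm : ∀ j, Measurable (ε j)) (hεtm : ∀ j, Measurable (εt j))
    -- X and Y are identically distributed
    (hXY : IdentDistrib X Y μ μ)
    -- each ε_j is a Bernoulli random variable with parameter 1 - p
    (hε01 : ∀ j ω, ε j ω ≤ 1)
    (hεP : ∀ j, μ {ω | ε j ω = 1} = ENNReal.ofReal (1 - p))
    -- each ε̃_j is a Bernoulli random variable with parameter 1 - q
    (hεt01 : ∀ j ω, εt j ω ≤ 1)
    (hεtP : ∀ j, μ {ω | εt j ω = 1} = ENNReal.ofReal (1 - q))
    -- X, Y, the ε_j's and the ε̃_j's are mutually independent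
    (hindep : iIndepFun
      (fun i : ℕ => if i = 0 then X else if i = 1 then Y
        else if (i - 2) % 2 = 0 then ε ((i - 2) / 2) else εt ((i - 2) / 2)) μ) :
    IndepFun
      (fun ω => (∑ j ∈ Finset.range (X ω), ε j ω) +
        ∑ j ∈ Finset.range (Y ω), εt j ω)
      (fun ω => (∑ j ∈ Finset.range (X ω), (1 - ε j ω)) +
        ∑ j ∈ Finset.range (Y ω), (1 - εt j ω)) μ ↔
    ∃ l : ℝ, 0 ≤ l ∧ ∀ k : ℕ,
      μ {ω | X ω = k} = ENNReal.ofReal (Real.exp (-l) * l ^ k / k.factorial) := by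
  classical
  set P : ℕ → ENNReal := fun k => μ {ω | X ω = k} with hPdef
  have hPfin : ∀ k, P k ≠ ⊤ := fun k => measure_ne_top μ _
  set b : ℕ → ℝ := fun k => (P k).toReal with hbdef
  have hb : ∀ k, 0 ≤ b k := fun k => ENNReal.toReal_nonneg
  have hofb : ∀ k, ENNReal.ofReal (b k) = P k := fun k => ENNReal.ofReal_toReal (hPfin k)
  have hindep' : iIndepFun (fam X Y ε εt) μ := hindep
  have hYP : ∀ k, μ {ω | Y ω = k} = P k := fun k =>
    (hXY.measure_mem_eq (measurableSet_singleton k)).symm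
  have hK1m : Measurable (fun ω => (∑ j ∈ Finset.range (X ω), ε j ω) +
      ∑ j ∈ Finset.range (Y ω), εt j ω) :=
    (measurable_sumrange X hXm hεm).add (measurable_sumrange Y hYm hεtm)
  have hK2m : Measurable (fun ω => (∑ j ∈ Finset.range (X ω), (1 - ε j ω)) +
      ∑ j ∈ Finset.range (Y ω), (1 - εt j ω)) :=
    (measurable_sumrange X hXm
      (fun t => (Measurable.of_discrete (f := fun x : ℕ => 1 - x)).comp (hεm t))).add
    (measurable_sumrange Y hYm
      (fun t => (Measurable.of_discrete (f := fun x : ℕ => 1 - x)).comp (hεtm t)))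
  -- the joint pmf of (K₁, K₂)
  have hJ : ∀ m n : ℕ, μ {ω | ((∑ j ∈ Finset.range (X ω), ε j ω) +
        ∑ j ∈ Finset.range (Y ω), εt j ω) = m
        ∧ ((∑ j ∈ Finset.range (X ω), (1 - ε j ω)) +
        ∑ j ∈ Finset.range (Y ω), (1 - εt j ω)) = n}
      = ENNReal.ofReal (Jr p q b m n) := by
    intro m n
    rw [J_decomp μ X Y ε εt hp0 hp1 hq0 hq1 hXm hYm hεm hεtm hε01 hεt01 hεP hεtP hindep' m n,
      Jr, ENNReal.ofReal_sum_of_nonneg (fun i _ => Finset.sum_nonneg fun j _ =>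
        mul_nonneg (ru_nonneg hp0.le hp1.le hb i j) (ru_nonneg hq0.le hq1.le hb (m-i) (n-j)))]
    refine Finset.sum_congr rfl fun i hi => ?_
    rw [ENNReal.ofReal_sum_of_nonneg (fun j _ =>
        mul_nonneg (ru_nonneg hp0.le hp1.le hb i j) (ru_nonneg hq0.le hq1.le hb (m-i) (n-j)))]
    refine Finset.sum_congr rfl fun j hj => ?_
    rw [hYP ((m-i)+(n-j)),
      term_ofReal hp0.le hp1.le (P (i+j)) (hPfin _) i j,
      term_ofReal hq0.le hq1.le (P ((m-i)+(n-j))) (hPfin _) (m-i) (n-j),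
      ← ENNReal.ofReal_mul (by
        have h1 : (0:ℝ) ≤ 1 - p := by linarith
        have h2 : (0:ℝ) ≤ (P (i+j)).toReal := ENNReal.toReal_nonneg
        positivity)]
    congr 1
  constructor
  · -- forward direction
    intro hInd
    have hfac : ∀ m n : ℕ, μ {ω | ((∑ j ∈ Finset.range (X ω), ε j ω) +
          ∑ j ∈ Finset.range (Y ω), εt j ω) = m
          ∧ ((∑ j ∈ Finset.range (X ω), (1 - ε j ω)) +
          ∑ j ∈ Finset.range (Y ω), (1 - εt j ω)) = n}
        = μ {ω | ((∑ j ∈ Finset.range (X ω), ε j ω) +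
          ∑ j ∈ Finset.range (Y ω), εt j ω) = m}
          * μ {ω | ((∑ j ∈ Finset.range (X ω), (1 - ε j ω)) +
          ∑ j ∈ Finset.range (Y ω), (1 - εt j ω)) = n} := by
      intro m n
      exact (ProbabilityTheory.indepFun_iff_measure_inter_preimage_eq_mul.mp hInd)
        {m} {n} (measurableSet_singleton m) (measurableSet_singleton n)
    have hrankJr : ∀ k, Jr p q b k 1 * Jr p q b 0 0 = Jr p q b k 0 * Jr p q b 0 1 := by
      intro k
      have hh : ENNReal.ofReal (Jr p q b k 1) * ENNReal.ofReal (Jr p q b 0 0)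
          = ENNReal.ofReal (Jr p q b k 0) * ENNReal.ofReal (Jr p q b 0 1) := by
        rw [← hJ, ← hJ, ← hJ, ← hJ, hfac k 1, hfac 0 0, hfac k 0, hfac 0 1]
        ring
      have hnn : ∀ m n : ℕ, 0 ≤ Jr p q b m n :=
        fun m n => Jr_nonneg hp0.le hp1.le hq0.le hq1.le hb m n
      rw [← ENNReal.ofReal_mul (hnn k 1), ← ENNReal.ofReal_mul (hnn k 0)] at hh
      exact (ENNReal.ofReal_eq_ofReal_iff (mul_nonneg (hnn k 1) (hnn 0 0))
        (mul_nonneg (hnn k 0) (hnn 0 1))).mp hh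
    -- some state has positive probability
    have hPsum : ∑' k, P k = 1 := tsum_fiber_one μ hXm
    have hex : ∃ k, P k ≠ 0 := by
      by_contra hcon
      push_neg at hcon
      rw [tsum_congr hcon, tsum_zero] at hPsum
      exact one_ne_zero hPsum.symm
    obtain ⟨k0, hk0⟩ := hex
    -- μ(K₁ = 0) ≠ 0
    have hM0 : μ {ω | ((∑ j ∈ Finset.range (X ω), ε j ω) +
        ∑ j ∈ Finset.range (Y ω), εt j ω) = 0} ≠ 0 := by
      rw [meas_fiber_tsum μ hK1m hK2m 0]
      intro hcon
      have hall := ENNReal.tsum_eq_zero.mp hcon (2 * k0)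
      rw [J_decomp μ X Y ε εt hp0 hp1 hq0 hq1 hXm hYm hεm hεtm hε01 hεt01 hεP hεtP hindep'
        0 (2 * k0)] at hall
      have hterm := (Finset.sum_eq_zero_iff.mp hall) 0 (Finset.mem_range.mpr (by omega))
      have hterm2 := (Finset.sum_eq_zero_iff.mp hterm) k0 (Finset.mem_range.mpr (by omega))
      simp only [Nat.zero_add, Nat.sub_zero, Nat.zero_sub, Nat.choose_zero_right,
        Nat.cast_one, pow_zero, one_mul, mul_one] at hterm2
      rw [show 2 * k0 - k0 = k0 by omega, hYP k0] at hterm2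
      rcases mul_eq_zero.mp hterm2 with h | h
      · rcases mul_eq_zero.mp h with h' | h'
        · exact hk0 h'
        · exact pow_ne_zero _ (ENNReal.ofReal_pos.mpr hp0).ne' h'
      · rcases mul_eq_zero.mp h with h' | h'
        · exact hk0 h'
        · exact pow_ne_zero _ (ENNReal.ofReal_pos.mpr hq0).ne' h'
    -- μ(K₂ = 0) ≠ 0
    have hN0 : μ {ω | ((∑ j ∈ Finset.range (X ω), (1 - ε j ω)) +
        ∑ j ∈ Finset.range (Y ω), (1 - εt j ω)) = 0} ≠ 0 := by
      rw [meas_fiber_tsum' μ hK1m hK2m 0]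
      intro hcon
      have hall := ENNReal.tsum_eq_zero.mp hcon (2 * k0)
      rw [J_decomp μ X Y ε εt hp0 hp1 hq0 hq1 hXm hYm hεm hεtm hε01 hεt01 hεP hεtP hindep'
        (2 * k0) 0] at hall
      have hterm := (Finset.sum_eq_zero_iff.mp hall) k0 (Finset.mem_range.mpr (by omega))
      have hterm2 := (Finset.sum_eq_zero_iff.mp hterm) 0 (Finset.mem_range.mpr (by omega))
      simp only [Nat.add_zero, Nat.sub_zero, Nat.zero_sub, Nat.choose_self,
        Nat.cast_one, pow_zero, one_mul, mul_one] at hterm2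
      rw [show 2 * k0 - k0 = k0 by omega, hYP k0] at hterm2
      rcases mul_eq_zero.mp hterm2 with h | h
      · rcases mul_eq_zero.mp h with h' | h'
        · exact hk0 h'
        · exact pow_ne_zero _ (ENNReal.ofReal_pos.mpr (by linarith : (0:ℝ) < 1 - p)).ne' h'
      · rcases mul_eq_zero.mp h with h' | h'
        · exact hk0 h'
        · exact pow_ne_zero _ (ENNReal.ofReal_pos.mpr (by linarith : (0:ℝ) < 1 - q)).ne' h'
    -- b 0 > 0
    have hb0 : 0 < b 0 := by
      have h00 : ENNReal.ofReal (Jr p q b 0 0) ≠ 0 := by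
        rw [← hJ 0 0, hfac 0 0]
        exact mul_ne_zero hM0 hN0
      rw [Jr00] at h00
      have : ¬ (b 0 * b 0 ≤ 0) := fun hle => h00 (ENNReal.ofReal_eq_zero.mpr hle)
      nlinarith [hb 0]
    have hrec := rec_of_rank p q hp0 hp1 hq0 hq1 b hb0 hrankJr
    have hsumb : ∑' k, b k = 1 := by
      have := ENNReal.tsum_toReal_eq hPfin
      rw [hPsum, ENNReal.toReal_one] at this
      exact this.symm
    obtain ⟨l, hl0, hform⟩ := poisson_of_rec b hb hb0 hrec hsumb
    exact ⟨l, hl0, fun k => by rw [show μ {ω | X ω = k} = P k from rfl, ← hofb k, hform k]⟩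
  · -- backward direction
    rintro ⟨l, hl0, hPois⟩
    have hbpoi : b = poi l := by
      funext k
      rw [hbdef]
      simp only
      rw [hPdef]
      simp only
      rw [hPois k, poi]
      exact ENNReal.toReal_ofReal (div_nonneg (mul_nonneg (Real.exp_nonneg _)
        (pow_nonneg hl0 _)) (Nat.cast_nonneg _))
    apply indep_of_pmf_factor μ hK1m hK2m
    intro m n
    rw [meas_fiber_tsum μ hK1m hK2m m, meas_fiber_tsum' μ hK1m hK2m n]
    have hnn : ∀ m' n' : ℕ, 0 ≤ Jr p q (poi l) m' n' :=
      fun m' n' => Jr_nonneg hp0.le hp1.le hq0.le hq1.le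
        (fun k => poi_nonneg hl0 k) m' n'
    calc μ {ω | ((∑ j ∈ Finset.range (X ω), ε j ω) +
          ∑ j ∈ Finset.range (Y ω), εt j ω) = m
          ∧ ((∑ j ∈ Finset.range (X ω), (1 - ε j ω)) +
          ∑ j ∈ Finset.range (Y ω), (1 - εt j ω)) = n}
        = ENNReal.ofReal (Jr p q (poi l) m n) := by rw [hJ m n, hbpoi]
      _ = ENNReal.ofReal ((∑' n', Jr p q (poi l) m n') * (∑' m', Jr p q (poi l) m' n)) := by
          rw [poi_Jr_rank_one]
      _ = (∑' n', ENNReal.ofReal (Jr p q (poi l) m n'))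
          * (∑' m', ENNReal.ofReal (Jr p q (poi l) m' n)) := by
          rw [ENNReal.ofReal_mul (tsum_nonneg (fun n' => hnn m n')),
            ENNReal.ofReal_tsum_of_nonneg (fun n' => hnn m n') (poi_Jr_summable_right p q l m),
            ENNReal.ofReal_tsum_of_nonneg (fun m' => hnn m' n) (poi_Jr_summable_left p q l n)]
      _ = (∑' n', μ {ω | ((∑ j ∈ Finset.range (X ω), ε j ω) +
          ∑ j ∈ Finset.range (Y ω), εt j ω) = m
          ∧ ((∑ j ∈ Finset.range (X ω), (1 - ε j ω)) +
          ∑ j ∈ Finset.range (Y ω), (1 - εt j ω)) = n'})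
          * (∑' m', μ {ω | ((∑ j ∈ Finset.range (X ω), ε j ω) +
          ∑ j ∈ Finset.range (Y ω), εt j ω) = m'
          ∧ ((∑ j ∈ Finset.range (X ω), (1 - ε j ω)) +
          ∑ j ∈ Finset.range (Y ω), (1 - εt j ω)) = n}) := by
          rw [← hbpoi]
          congr 1
          · exact (tsum_congr fun n' => (hJ m n').symm)
          · exact (tsum_congr fun m' => (hJ m' n).symm)
end

section
/- Suppose the probability generating function 𝒫 of the ℕ-valued random variable X satisfies, for all real u, v with 0 ≤ u ≤ 1 and 0 ≤ v ≤ 1, the functional equation 𝒫((1-p)u + pv)·𝒫((1-q)u + qv) = 𝒫((1-p)u + p)·𝒫((1-q)u + q)·𝒫((1-p) + pv)·𝒫((1-q) + qv). Then there exists λ ≥ 0 such that 𝒫(z) = exp(λ(z-1)) for all z ∈ [0,1]; equivalently, X is Poisson distributed with P(X = k) = e^{-λ} λ^k / k! for all k ∈ ℕ. -/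
open MeasureTheory ProbabilityTheory

section PoissonAux

lemma pgfaux_shift_summable {a : ℕ → ℝ} (ha : Summable a) (n : ℕ) : Summable fun k => a (n + k) :=
  (((summable_nat_add_iff n).2 ha)).congr (fun k => by rw [Nat.add_comm])

lemma pgfaux_pow_term_summable {a : ℕ → ℝ} (ha : Summable a) (n : ℕ) {z : ℝ} (hz : |z| ≤ 1) :
    Summable (fun k => a (n + k) * z ^ k) := by
  refine Summable.of_norm_bounded (g := fun k => |a (n + k)|) (pgfaux_shift_summable ha n).abs ?_
  intro k
  rw [norm_mul, norm_pow, Real.norm_eq_abs, Real.norm_eq_abs]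
  have h1 : |z| ^ k ≤ 1 := pow_le_one₀ (abs_nonneg z) hz
  nlinarith [abs_nonneg (a (n+k)), pow_nonneg (abs_nonneg z) k]

lemma pgfaux_pow_summable {a : ℕ → ℝ} (ha : Summable a) {z : ℝ} (hz : |z| ≤ 1) :
    Summable (fun k => a k * z ^ k) := by
  have := pgfaux_pow_term_summable ha 0 hz
  simpa using this

lemma pgfaux_tail_rec (a : ℕ → ℝ) (ha : Summable a) (m : ℕ) (z : ℝ) (hz : |z| ≤ 1) :
    (∑' k, a (m + k) * z ^ k) = a m + z * ∑' k, a (m + 1 + k) * z ^ k := by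
  rw [Summable.tsum_eq_zero_add (pgfaux_pow_term_summable ha m hz)]
  congr 1
  · simp
  · rw [← tsum_mul_left]
    refine tsum_congr fun k => ?_
    have : m + (k + 1) = m + 1 + k := by omega
    rw [this]
    ring

lemma pgfaux_tail_bound (a : ℕ → ℝ) (ha : Summable a) (m : ℕ) (z : ℝ) (hz0 : 0 ≤ z)
    (hz : z ≤ 1) : |∑' k, a (m + k) * z ^ k| ≤ ∑' k, |a k| := by
  have habs : Summable fun k => |a k| := ha.abs
  have hzabs : |z| ≤ 1 := by rw [abs_of_nonneg hz0]; exact hz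
  have hs : Summable (fun k => a (m + k) * z ^ k) := pgfaux_pow_term_summable ha m hzabs
  have step1 : |∑' k, a (m + k) * z ^ k| ≤ ∑' k, |a (m + k) * z ^ k| := by
    exact norm_tsum_le_tsum_norm (f := fun k => a (m + k) * z ^ k) hs.abs
  have step2 : (∑' k, |a (m + k) * z ^ k|) ≤ ∑' k, |a (m + k)| := by
    refine Summable.tsum_le_tsum (fun k => ?_) hs.abs (pgfaux_shift_summable ha m).abs
    rw [abs_mul, abs_pow, abs_of_nonneg hz0]
    have h1 : z ^ k ≤ 1 := pow_le_one₀ hz0 hz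
    nlinarith [abs_nonneg (a (m+k)), pow_nonneg hz0 k]
  have step3 : (∑' k, |a (m + k)|) ≤ ∑' k, |a k| := by
    have h2 : (∑' k, |a (m + k)|) = ∑' k, |a (k + m)| :=
      tsum_congr fun k => by rw [Nat.add_comm]
    have hpos : 0 ≤ ∑ i ∈ Finset.range m, |a i| := Finset.sum_nonneg fun i _ => abs_nonneg _
    have := Summable.sum_add_tsum_nat_add (f := fun k => |a k|) m habs
    rw [h2]
    linarith
  linarith

lemma pgfaux_strip_step (a c : ℕ → ℝ) (ha : Summable a) (hc : Summable c) (m : ℕ)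
    (htails : ∀ z : ℝ, z ∈ Set.Ioo (0:ℝ) 1 →
      (∑' k, a (m + k) * z ^ k) = ∑' k, c (m + k) * z ^ k) :
    a m = c m ∧ ∀ z : ℝ, z ∈ Set.Ioo (0:ℝ) 1 →
      (∑' k, a (m + 1 + k) * z ^ k) = ∑' k, c (m + 1 + k) * z ^ k := by
  set K : ℝ := (∑' k, |a k|) + (∑' k, |c k|) + 1 with hK
  have h1 : (0:ℝ) ≤ ∑' k, |a k| := tsum_nonneg fun k => abs_nonneg _
  have h2 : (0:ℝ) ≤ ∑' k, |c k| := tsum_nonneg fun k => abs_nonneg _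
  have hKpos : 0 < K := by linarith
  have key : ∀ z : ℝ, z ∈ Set.Ioo (0:ℝ) 1 →
      a m - c m = z * ((∑' k, c (m + 1 + k) * z ^ k) - ∑' k, a (m + 1 + k) * z ^ k) := by
    intro z hz
    have hzabs : |z| ≤ 1 := by rw [abs_of_nonneg hz.1.le]; exact hz.2.le
    have h3 := htails z hz
    rw [pgfaux_tail_rec a ha m z hzabs, pgfaux_tail_rec c hc m z hzabs] at h3
    ring_nf at h3 ⊢
    linarith
  have heq : a m = c m := by
    by_contra hne
    have heps : 0 < |a m - c m| := abs_pos.2 (sub_ne_zero.2 hne)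
    set z : ℝ := min (|a m - c m| / (2 * K)) (1/2) with hzdef
    have hz : z ∈ Set.Ioo (0:ℝ) 1 :=
      ⟨lt_min (by positivity) (by norm_num), lt_of_le_of_lt (min_le_right _ _) (by norm_num)⟩
    have hb : |a m - c m| ≤ z * K := by
      rw [key z hz, abs_mul, abs_of_nonneg hz.1.le]
      refine mul_le_mul_of_nonneg_left ?_ hz.1.le
      calc |(∑' k, c (m + 1 + k) * z ^ k) - ∑' k, a (m + 1 + k) * z ^ k|
          ≤ |∑' k, c (m + 1 + k) * z ^ k| + |∑' k, a (m + 1 + k) * z ^ k| := abs_sub _ _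
        _ ≤ K := by
            have := pgfaux_tail_bound a ha (m+1) z hz.1.le hz.2.le
            have := pgfaux_tail_bound c hc (m+1) z hz.1.le hz.2.le
            linarith
    have hzle : z ≤ |a m - c m| / (2 * K) := min_le_left _ _
    have : |a m - c m| ≤ |a m - c m| / 2 := by
      calc |a m - c m| ≤ z * K := hb
        _ ≤ (|a m - c m| / (2 * K)) * K := by nlinarith
        _ = |a m - c m| / 2 := by field_simp
    linarith
  refine ⟨heq, fun z hz => ?_⟩
  have := key z hz
  rw [heq] at this
  have hz0 : z ≠ 0 := ne_of_gt hz.1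
  have : 0 = z * ((∑' k, c (m + 1 + k) * z ^ k) - ∑' k, a (m + 1 + k) * z ^ k) := by linarith
  have := (mul_eq_zero.1 this.symm).resolve_left hz0
  linarith

lemma pgfaux_coeff_unique (a c : ℕ → ℝ) (ha : Summable a) (hc : Summable c)
    (h : ∀ z : ℝ, z ∈ Set.Ioo (0:ℝ) 1 → (∑' k, a k * z ^ k) = ∑' k, c k * z ^ k) :
    ∀ m, a m = c m := by
  have main : ∀ m, ∀ z : ℝ, z ∈ Set.Ioo (0:ℝ) 1 →
      (∑' k, a (m + k) * z ^ k) = ∑' k, c (m + k) * z ^ k := by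
    intro m
    induction m with
    | zero => intro z hz; simpa using h z hz
    | succ n ih => exact (pgfaux_strip_step a c ha hc n ih).2
  exact fun m => (pgfaux_strip_step a c ha hc m (main m)).1

lemma pgfaux_mem_unit_ball {z : ℝ} (hz : |z| < 1) : z ∈ EMetric.ball (0:ℝ) 1 := by
  change z ∈ Metric.eball (0:ℝ) 1
  rw [Metric.mem_eball, edist_dist, Real.dist_eq, sub_zero]
  exact_mod_cast ENNReal.ofReal_lt_one.2 hz

lemma pgfaux_const_on_Ioo (f : ℝ → ℝ) (hderiv : ∀ z ∈ Set.Ioo (0:ℝ) 1, HasDerivAt f 0 z) :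
    ∀ z ∈ Set.Ioo (0:ℝ) 1, f z = f (1/2) := by
  intro z hz
  have hsub : ∀ x y : ℝ, x ∈ Set.Ioo (0:ℝ) 1 → y ∈ Set.Ioo (0:ℝ) 1 → x ≤ y →
      f y = f x := by
    intro x y hx hy hxy
    have hI : Set.Icc x y ⊆ Set.Ioo (0:ℝ) 1 := fun t ht =>
      ⟨lt_of_lt_of_le hx.1 ht.1, lt_of_le_of_lt ht.2 hy.2⟩
    have hcont : ContinuousOn f (Set.Icc x y) := fun t ht =>
      ((hderiv t (hI ht)).continuousAt).continuousWithinAt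
    have hd : ∀ t ∈ Set.Ico x y, HasDerivWithinAt f 0 (Set.Ici t) t := fun t ht =>
      (hderiv t (hI ⟨ht.1, ht.2.le⟩)).hasDerivWithinAt
    exact constant_of_has_deriv_right_zero hcont hd y ⟨hxy, le_refl _⟩
  have h2 : (1/2 : ℝ) ∈ Set.Ioo (0:ℝ) 1 := by norm_num
  rcases le_total z (1/2 : ℝ) with h | h
  · exact (hsub z (1/2) hz h2 h).symm
  · exact hsub (1/2) z h2 hz h

lemma pgfaux_logF_hasDerivAt (F : ℝ → ℝ) {y : ℝ} (hFd : DifferentiableAt ℝ F y)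
    (hne : F y ≠ 0) (α β v : ℝ) (hy : y = α + β * v) :
    HasDerivAt (fun w => Real.log (F (α + β * w))) ((F y)⁻¹ * deriv F y * β) v := by
  subst hy
  have h1 : HasDerivAt (fun w : ℝ => α + β * w) β v := by
    simpa using ((hasDerivAt_id v).const_mul β).const_add α
  have h2 : HasDerivAt (fun w => F (α + β * w)) (deriv F (α + β * v) * β) v :=
    (hFd.hasDerivAt).comp v h1
  have h3 := (Real.hasDerivAt_log hne).comp v h2
  simpa [Function.comp_def, mul_assoc] using h3

lemma pgfaux_MF_hasDerivAt (M : ℝ → ℝ) {y : ℝ} (hMd : DifferentiableAt ℝ M y)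
    (α β v : ℝ) (hy : y = α + β * v) :
    HasDerivAt (fun w => M (α + β * w)) (deriv M y * β) v := by
  subst hy
  have h1 : HasDerivAt (fun w : ℝ => α + β * w) β v := by
    simpa using ((hasDerivAt_id v).const_mul β).const_add α
  exact (hMd.hasDerivAt).comp v h1

lemma pgfaux_core_ode (F : ℝ → ℝ) (p q : ℝ) (hp0 : 0 < p) (hp1 : p < 1) (hq0 : 0 < q)
    (hq1 : q < 1)
    (hF : AnalyticOnNhd ℝ F (EMetric.ball (0:ℝ) 1))
    (hFpos : ∀ t : ℝ, 0 < t → t ≤ 1 → 0 < F t)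
    (hfe : ∀ u v : ℝ, u ∈ Set.Ioo (0:ℝ) 1 → v ∈ Set.Ioo (0:ℝ) 1 →
      F ((1 - p) * u + p * v) * F ((1 - q) * u + q * v) =
        F ((1 - p) * u + p) * F ((1 - q) * u + q) *
          (F ((1 - p) + p * v) * F ((1 - q) + q * v))) :
    ∃ C l : ℝ, 0 < C ∧ ∀ z ∈ Set.Ioo (0:ℝ) 1, F z = C * Real.exp (l * z) := by
  have hball : ∀ t : ℝ, 0 < t → t < 1 → t ∈ EMetric.ball (0:ℝ) 1 := fun t h1 h2 =>
    pgfaux_mem_unit_ball (by rw [abs_of_pos h1]; exact h2)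
  have hFd : ∀ t ∈ Set.Ioo (0:ℝ) 1, DifferentiableAt ℝ F t := fun t ht =>
    (hF t (hball t ht.1 ht.2)).differentiableAt
  have hdF : ∀ t ∈ Set.Ioo (0:ℝ) 1, DifferentiableAt ℝ (deriv F) t := fun t ht =>
    ((hF.deriv) t (hball t ht.1 ht.2)).differentiableAt
  have hFne : ∀ t : ℝ, 0 < t → t ≤ 1 → F t ≠ 0 := fun t h1 h2 => ne_of_gt (hFpos t h1 h2)
  set M : ℝ → ℝ := fun z => (F z)⁻¹ * deriv F z with hM
  have hMd : ∀ t ∈ Set.Ioo (0:ℝ) 1, DifferentiableAt ℝ M t := fun t ht =>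
    ((hFd t ht).inv (hFne t ht.1 ht.2.le)).mul (hdF t ht)
  have memx : ∀ u v : ℝ, u ∈ Set.Ioo (0:ℝ) 1 → v ∈ Set.Ioo (0:ℝ) 1 → ∀ r : ℝ, 0 < r → r < 1 →
      (1 - r) * u + r * v ∈ Set.Ioo (0:ℝ) 1 := by
    intro u v hu hv r h1 h2
    constructor
    · have := hu.1; have := hv.1; nlinarith
    · have := hu.2; have := hv.2; nlinarith
  have memy : ∀ v : ℝ, v ∈ Set.Ioo (0:ℝ) 1 → ∀ r : ℝ, 0 < r → r < 1 →
      (1 - r) + r * v ∈ Set.Ioo (0:ℝ) 1 := by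
    intro v hv r h1 h2
    constructor
    · have := hv.1; nlinarith
    · have := hv.2; nlinarith
  have memz : ∀ u : ℝ, u ∈ Set.Ioo (0:ℝ) 1 → ∀ r : ℝ, 0 < r → r < 1 →
      ((1 - r) * u + r ∈ Set.Ioo (0:ℝ) 1) := by
    intro u hu r h1 h2
    constructor
    · have := hu.1; nlinarith
    · have := hu.2; nlinarith
  have hlog : ∀ u v : ℝ, u ∈ Set.Ioo (0:ℝ) 1 → v ∈ Set.Ioo (0:ℝ) 1 →
      Real.log (F ((1 - p) * u + p * v)) + Real.log (F ((1 - q) * u + q * v)) =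
        (Real.log (F ((1 - p) * u + p)) + Real.log (F ((1 - q) * u + q))) +
          (Real.log (F ((1 - p) + p * v)) + Real.log (F ((1 - q) + q * v))) := by
    intro u v hu hv
    have m1 := memx u v hu hv p hp0 hp1
    have m2 := memx u v hu hv q hq0 hq1
    have m3 := memz u hu p hp0 hp1
    have m4 := memz u hu q hq0 hq1
    have m5 := memy v hv p hp0 hp1
    have m6 := memy v hv q hq0 hq1
    have n1 := hFne _ m1.1 m1.2.le
    have n2 := hFne _ m2.1 m2.2.le
    have n3 := hFne _ m3.1 m3.2.le
    have n4 := hFne _ m4.1 m4.2.le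
    have n5 := hFne _ m5.1 m5.2.le
    have n6 := hFne _ m6.1 m6.2.le
    rw [← Real.log_mul n1 n2, hfe u v hu hv, Real.log_mul (mul_ne_zero n3 n4) (mul_ne_zero n5 n6),
      Real.log_mul n3 n4, Real.log_mul n5 n6]
  have E1 : ∀ u v : ℝ, u ∈ Set.Ioo (0:ℝ) 1 → v ∈ Set.Ioo (0:ℝ) 1 →
      M ((1 - p) * u + p * v) * p + M ((1 - q) * u + q * v) * q =
        M ((1 - p) + p * v) * p + M ((1 - q) + q * v) * q := by
    intro u v hu hv
    have m1 := memx u v hu hv p hp0 hp1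
    have m2 := memx u v hu hv q hq0 hq1
    have m5 := memy v hv p hp0 hp1
    have m6 := memy v hv q hq0 hq1
    have hL : HasDerivAt (fun w => Real.log (F ((1 - p) * u + p * w)) +
        Real.log (F ((1 - q) * u + q * w)))
        ((F ((1-p)*u+p*v))⁻¹ * deriv F ((1-p)*u+p*v) * p +
         (F ((1-q)*u+q*v))⁻¹ * deriv F ((1-q)*u+q*v) * q) v :=
      (pgfaux_logF_hasDerivAt F (hFd _ m1) (hFne _ m1.1 m1.2.le) _ _ v rfl).add
        (pgfaux_logF_hasDerivAt F (hFd _ m2) (hFne _ m2.1 m2.2.le) _ _ v rfl)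
    have hR : HasDerivAt (fun w => (Real.log (F ((1 - p) * u + p)) +
        Real.log (F ((1 - q) * u + q))) +
          (Real.log (F ((1 - p) + p * w)) + Real.log (F ((1 - q) + q * w))))
        ((F ((1-p)+p*v))⁻¹ * deriv F ((1-p)+p*v) * p +
         (F ((1-q)+q*v))⁻¹ * deriv F ((1-q)+q*v) * q) v := by
      have := (pgfaux_logF_hasDerivAt F (hFd _ m5) (hFne _ m5.1 m5.2.le) (1-p) p v rfl).add
        (pgfaux_logF_hasDerivAt F (hFd _ m6) (hFne _ m6.1 m6.2.le) (1-q) q v rfl)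
      simpa using this.const_add (Real.log (F ((1 - p) * u + p)) + Real.log (F ((1 - q) * u + q)))
    have heq : (fun w => Real.log (F ((1 - p) * u + p * w)) +
        Real.log (F ((1 - q) * u + q * w))) =ᶠ[nhds v]
        (fun w => (Real.log (F ((1 - p) * u + p)) + Real.log (F ((1 - q) * u + q))) +
          (Real.log (F ((1 - p) + p * w)) + Real.log (F ((1 - q) + q * w)))) := by
      filter_upwards [isOpen_Ioo.mem_nhds hv] with w hw
      exact hlog u w hu hw
    have hL' := hL.congr_of_eventuallyEq heq.symm
    exact hL'.unique hR
  have E2 : ∀ s : ℝ, s ∈ Set.Ioo (0:ℝ) 1 → deriv M s = 0 := by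
    intro s hs
    have hLd : HasDerivAt (fun w => M ((1 - p) * w + p * s) * p + M ((1 - q) * w + q * s) * q)
        (deriv M ((1-p)*s+p*s) * (1-p) * p + deriv M ((1-q)*s+q*s) * (1-q) * q) s := by
      have m1 := memx s s hs hs p hp0 hp1
      have m2 := memx s s hs hs q hq0 hq1
      have h1 := (pgfaux_MF_hasDerivAt M (hMd _ m1) (p*s) (1-p) s (by ring)).mul_const p
      have h2 := (pgfaux_MF_hasDerivAt M (hMd _ m2) (q*s) (1-q) s (by ring)).mul_const q
      have h3 := h1.add h2
      have e1 : ∀ w : ℝ, p * s + (1 - p) * w = (1-p)*w + p*s := fun w => by ring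
      have e2 : ∀ w : ℝ, q * s + (1 - q) * w = (1-q)*w + q*s := fun w => by ring
      simp only [e1, e2, Pi.add_def] at h3
      convert h3 using 2 <;> ring
    have hconst : HasDerivAt (fun _ : ℝ => M ((1 - p) + p * s) * p + M ((1 - q) + q * s) * q)
        (0:ℝ) s := hasDerivAt_const _ _
    have heq : (fun w => M ((1 - p) * w + p * s) * p + M ((1 - q) * w + q * s) * q) =ᶠ[nhds s]
        (fun _ => M ((1 - p) + p * s) * p + M ((1 - q) + q * s) * q) := by
      filter_upwards [isOpen_Ioo.mem_nhds hs] with w hw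
      exact E1 w s hw hs
    have := (hLd.congr_of_eventuallyEq heq.symm).unique hconst
    have es : (1-p)*s + p*s = s := by ring
    have es' : (1-q)*s + q*s = s := by ring
    rw [es, es'] at this
    have hfac : deriv M s * ((1-p)*p + (1-q)*q) = 0 := by linarith [this]
    have hpos : 0 < (1-p)*p + (1-q)*q := by nlinarith
    rcases mul_eq_zero.1 hfac with h | h
    · exact h
    · exact absurd h (ne_of_gt hpos)
  have hMder0 : ∀ z ∈ Set.Ioo (0:ℝ) 1, HasDerivAt M 0 z := by
    intro z hz
    have := (hMd z hz).hasDerivAt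
    rwa [E2 z hz] at this
  set l : ℝ := M (1/2) with hl
  have hMconst : ∀ z ∈ Set.Ioo (0:ℝ) 1, M z = l := pgfaux_const_on_Ioo M hMder0
  have hFode : ∀ z ∈ Set.Ioo (0:ℝ) 1, deriv F z = l * F z := by
    intro z hz
    have h1 := hMconst z hz
    have h2 := hFne z hz.1 hz.2.le
    rw [hM] at h1
    field_simp at h1
    linarith [h1]
  set W : ℝ → ℝ := fun z => F z * Real.exp (-(l * z)) with hW
  have hWder : ∀ z ∈ Set.Ioo (0:ℝ) 1, HasDerivAt W 0 z := by
    intro z hz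
    have hexp : HasDerivAt (fun w : ℝ => Real.exp (-(l * w)))
        (Real.exp (-(l * z)) * (-l)) z := by
      have h1 : HasDerivAt (fun w : ℝ => -(l * w)) (-l) z := by
        simpa [Pi.neg_def] using ((hasDerivAt_id z).const_mul l).neg
      simpa [Function.comp_def] using (Real.hasDerivAt_exp (-(l*z))).comp z h1
    have hprod := ((hFd z hz).hasDerivAt).mul hexp
    have : deriv F z * Real.exp (-(l * z)) + F z * (Real.exp (-(l * z)) * (-l)) = 0 := by
      rw [hFode z hz]; ring
    rwa [this] at hprod
  have hWconst : ∀ z ∈ Set.Ioo (0:ℝ) 1, W z = W (1/2) := pgfaux_const_on_Ioo W hWder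
  refine ⟨W (1/2), l, ?_, ?_⟩
  · have := hFpos (1/2) (by norm_num) (by norm_num)
    rw [hW]
    positivity
  · intro z hz
    have hwz := hWconst z hz
    rw [hW] at hwz
    simp only at hwz
    have hek : Real.exp (-(l * z)) * Real.exp (l * z) = 1 := by
      rw [← Real.exp_add]; norm_num
    calc F z = (F z * Real.exp (-(l * z))) * Real.exp (l * z) := by
          rw [mul_assoc, hek, mul_one]
      _ = W (1/2) * Real.exp (l * z) := by
          show (F z * Real.exp (-(l * z))) * Real.exp (l * z)
            = (F (1/2) * Real.exp (-(l * (1/2)))) * Real.exp (l * z)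
          rw [hwz]

end PoissonAux

/-- If the probability generating function `𝒫` of the `ℕ`-valued random variable `X`
satisfies the independence functional equation
`𝒫((1-p)u + pv)·𝒫((1-q)u + qv) = 𝒫((1-p)u + p)·𝒫((1-q)u + q)·𝒫((1-p) + pv)·𝒫((1-q) + qv)`
on `[0,1] × [0,1]`, then there exists `λ ≥ 0` with `𝒫(z) = exp(λ(z-1))` on `[0,1]`;
equivalently, `X` is Poisson distributed. -/
theorem pgf_functional_equation_implies_poisson
    {Ω : Type*} [MeasurableSpace Ω] (μ : Measure Ω) [IsProbabilityMeasure μ]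
    (p q : ℝ) (hp0 : 0 < p) (hp1 : p < 1) (hq0 : 0 < q) (hq1 : q < 1)
    (X : Ω → ℕ) (hXm : Measurable X)
    (P : ℝ → ℝ) (hP : ∀ t : ℝ, P t = ∫ ω, t ^ X ω ∂μ)
    (hfe : ∀ u v : ℝ, 0 ≤ u → u ≤ 1 → 0 ≤ v → v ≤ 1 →
      P ((1 - p) * u + p * v) * P ((1 - q) * u + q * v) =
        P ((1 - p) * u + p) * P ((1 - q) * u + q) *
          (P ((1 - p) + p * v) * P ((1 - q) + q * v))) :
    ∃ l : ℝ, 0 ≤ l ∧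
      (∀ z : ℝ, 0 ≤ z → z ≤ 1 → P z = Real.exp (l * (z - 1))) ∧
      (∀ k : ℕ, μ {ω | X ω = k} =
        ENNReal.ofReal (Real.exp (-l) * l ^ k / k.factorial)) := by
  classical
  set a : ℕ → ℝ := fun k => (μ {ω | X ω = k}).toReal with ha_def
  have ha_nonneg : ∀ k, 0 ≤ a k := fun k => ENNReal.toReal_nonneg
  have hmeas : ∀ k : ℕ, MeasurableSet {ω | X ω = k} := fun k => hXm (measurableSet_singleton k)
  have hparts : (∑' k : ℕ, μ {ω | X ω = k}) = 1 := by
    rw [← measure_iUnion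
      (fun i j hij => Set.disjoint_left.2 fun ω h1 h2 => hij (h1.symm.trans h2)) hmeas]
    have : (⋃ k : ℕ, {ω | X ω = k}) = Set.univ :=
      Set.eq_univ_iff_forall.2 fun ω => Set.mem_iUnion.2 ⟨X ω, rfl⟩
    rw [this, measure_univ]
  have ha_summable : Summable a :=
    ENNReal.summable_toReal (by rw [hparts]; exact ENNReal.one_ne_top)
  have ha_sum : (∑' k, a k) = 1 := by
    have h := ENNReal.tsum_toReal_eq (fun k => measure_ne_top μ {ω | X ω = k})
    rw [ha_def]
    rw [← h, hparts, ENNReal.toReal_one]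
  set F : ℝ → ℝ := fun z => ∑' k, a k * z ^ k with hF_def
  -- P coincides with F on [0,1]
  have hPF : ∀ t : ℝ, 0 ≤ t → t ≤ 1 → P t = F t := by
    intro t ht0 ht1
    have hint : Integrable (fun n : ℕ => t ^ n) (μ.map X) := by
      refine Integrable.mono' (integrable_const 1)
        ((measurable_from_nat).aestronglyMeasurable) ?_
      refine Filter.Eventually.of_forall fun n => ?_
      rw [Real.norm_eq_abs, abs_pow, abs_of_nonneg ht0]
      exact pow_le_one₀ ht0 ht1
    have h1 : ∫ ω, t ^ X ω ∂μ = ∫ n, t ^ n ∂(μ.map X) :=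
      (integral_map hXm.aemeasurable hint.aestronglyMeasurable).symm
    rw [hP, h1, integral_countable' hint, hF_def]
    refine tsum_congr fun k => ?_
    rw [measureReal_def, Measure.map_apply hXm (measurableSet_singleton k), smul_eq_mul]
    norm_num [Set.preimage, Set.mem_singleton_iff]
    exact Or.inl rfl
  -- power series structure
  have hps : HasFPowerSeriesOnBall F (FormalMultilinearSeries.ofScalars ℝ a) 0 1 := by
    constructor
    · refine FormalMultilinearSeries.le_radius_of_summable _ ?_
      simp only [FormalMultilinearSeries.ofScalars_norm]
      refine ha_summable.congr fun k => ?_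
      rw [Real.norm_eq_abs, abs_of_nonneg (ha_nonneg k)]
      norm_num
    · norm_num
    · intro y hy
      simp only [EMetric.mem_ball, edist_dist, zero_add] at hy ⊢
      have hy' : |y| < 1 := by
        simpa [Real.dist_eq] using hy
      have hsum := (pgfaux_pow_summable ha_summable hy'.le).hasSum
      refine HasSum.congr_fun hsum fun k => ?_
      rw [FormalMultilinearSeries.ofScalars_apply_eq]
      simp [mul_comm]
  -- positivity of F on (0,1]
  have hFpos : ∀ t : ℝ, 0 < t → t ≤ 1 → 0 < F t := by
    intro t ht0 ht1
    have hexK : ∃ K, a K ≠ 0 := by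
      by_contra h
      push_neg at h
      rw [show a = (fun _ => (0:ℝ)) from funext h, tsum_zero] at ha_sum
      linarith
    obtain ⟨K, hK⟩ := hexK
    have hKpos : 0 < a K := lt_of_le_of_ne (ha_nonneg K) (Ne.symm hK)
    have habs : |t| ≤ 1 := by rw [abs_of_pos ht0]; exact ht1
    have hle : a K * t ^ K ≤ F t := by
      refine Summable.le_tsum (pgfaux_pow_summable ha_summable habs) K fun j _ =>
        mul_nonneg (ha_nonneg j) (pow_nonneg ht0.le j)
    have : 0 < a K * t ^ K := mul_pos hKpos (pow_pos ht0 K)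
    linarith
  -- functional equation for F
  have hfeF : ∀ u v : ℝ, u ∈ Set.Ioo (0:ℝ) 1 → v ∈ Set.Ioo (0:ℝ) 1 →
      F ((1 - p) * u + p * v) * F ((1 - q) * u + q * v) =
        F ((1 - p) * u + p) * F ((1 - q) * u + q) *
          (F ((1 - p) + p * v) * F ((1 - q) + q * v)) := by
    intro u v hu hv
    have h := hfe u v hu.1.le hu.2.le hv.1.le hv.2.le
    rw [hPF ((1-p)*u+p*v) (by nlinarith [hu.1, hv.1]) (by nlinarith [hu.2, hv.2, hu.1, hv.1]),
      hPF ((1-q)*u+q*v) (by nlinarith [hu.1, hv.1]) (by nlinarith [hu.2, hv.2, hu.1, hv.1]),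
      hPF ((1-p)*u+p) (by nlinarith [hu.1]) (by nlinarith [hu.2, hu.1]),
      hPF ((1-q)*u+q) (by nlinarith [hu.1]) (by nlinarith [hu.2, hu.1]),
      hPF ((1-p)+p*v) (by nlinarith [hv.1]) (by nlinarith [hv.2, hv.1]),
      hPF ((1-q)+q*v) (by nlinarith [hv.1]) (by nlinarith [hv.2, hv.1])] at h
    exact h
  obtain ⟨C, l, hCpos, hFz⟩ :=
    pgfaux_core_ode F p q hp0 hp1 hq0 hq1 hps.analyticOnNhd hFpos hfeF
  -- Poisson coefficients
  set c : ℕ → ℝ := fun k => C * l ^ k / (k.factorial : ℝ) with hc_def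
  have hexp : ∀ x : ℝ, HasSum (fun n : ℕ => x ^ n / (n.factorial : ℝ)) (Real.exp x) := by
    intro x
    rw [Real.exp_eq_exp_ℝ]
    exact NormedSpace.expSeries_div_hasSum_exp x
  have hasSumc : ∀ z : ℝ, HasSum (fun k => c k * z ^ k) (C * Real.exp (l * z)) := by
    intro z
    have h := (hexp (l * z)).mul_left C
    refine HasSum.congr_fun h fun k => ?_
    rw [hc_def]
    simp only [mul_pow]
    field_simp
  have hc_summable : Summable c := by
    have := (hasSumc 1).summable
    refine this.congr fun k => by simp
  have htsum_eq : ∀ z : ℝ, z ∈ Set.Ioo (0:ℝ) 1 →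
      (∑' k, a k * z ^ k) = ∑' k, c k * z ^ k := by
    intro z hz
    have h1 : (∑' k, a k * z ^ k) = F z := rfl
    rw [h1, hFz z hz, (hasSumc z).tsum_eq]
  have hac : ∀ m, a m = c m := pgfaux_coeff_unique a c ha_summable hc_summable htsum_eq
  -- identify C
  have hCsum : C * Real.exp l = 1 := by
    have h1 : (∑' k, c k) = C * Real.exp (l * 1) := by
      have := (hasSumc 1).tsum_eq
      rw [← this]
      exact tsum_congr fun k => by simp
    have h2 : (∑' k, c k) = 1 := by
      rw [← ha_sum]
      exact (tsum_congr fun k => (hac k).symm)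
    rw [h2] at h1
    rw [mul_one] at h1
    exact h1.symm
  have hC : C = Real.exp (-l) := by
    have h := hCsum
    have : C = (Real.exp l)⁻¹ := by
      field_simp at h ⊢
      linarith
    rw [this, ← Real.exp_neg]
  have hlnn : 0 ≤ l := by
    have h1 : a 1 = C * l := by
      rw [hac 1, hc_def]
      norm_num
    have h2 : 0 ≤ C * l := h1 ▸ ha_nonneg 1
    nlinarith
  refine ⟨l, hlnn, ?_, ?_⟩
  · intro z hz0 hz1
    rcases eq_or_lt_of_le hz1 with h1 | h1
    · subst h1
      rw [hP 1]
      simp [Real.exp_zero]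
    rcases eq_or_lt_of_le hz0 with h0 | h0
    · -- z = 0
      subst h0
      rw [hPF 0 le_rfl (by norm_num)]
      have hF0 : F 0 = a 0 := by
        have h : F 0 = ∑' k, a k * (0:ℝ) ^ k := rfl
        rw [h, tsum_eq_single 0 (fun k hk => by simp [zero_pow hk])]
        simp
      rw [hF0, hac 0, hc_def]
      simp [hC]
    · rw [hPF z hz0 hz1, hFz z ⟨h0, h1⟩, hC, ← Real.exp_add]
      congr 1
      ring
  · intro k
    have h1 : μ {ω | X ω = k} = ENNReal.ofReal (a k) :=
      (ENNReal.ofReal_toReal (measure_ne_top μ _)).symm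
    rw [h1, hac k, hc_def, hC]
end
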